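/- arXiv:2101.07545 — 6 statements merged into one kernel-verified Lean document; each statement's English description precedes it below -/
import Mathlib

section
/- Let H be a real Hilbert space, λ ∈ ℝ, and let f_h, f : H → (-∞,∞] be proper, λ-convex, lower semicontinuous functions such that: for every x ∈ H there exist y_h → x strongly with limsup_h f_h(y_h) ≤ f(x), and for every sequence x_h → x strongly, liminf_h f_h(x_h) ≥ f(x). Then for every x ∈ H and every sequence x_h → x strongly, one has liminf_h |∇f_h|(x_h) ≥ |∇f|(x). -/
open Filter Topology MeasureTheory Set
open scoped ENNReal RealInnerProductSpace

noncomputable section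

attribute [local instance] Classical.propDecidable

variable {H : Type*} [NormedAddCommGroup H] [InnerProductSpace ℝ H] [CompleteSpace H]

/-- `f : H → (-∞,∞]` is proper: not identically `⊤` (and it never takes the value `⊥`). -/
def ProperFn (f : H → EReal) : Prop :=
  (∃ x, f x ≠ ⊤) ∧ ∀ x, f x ≠ ⊥

/-- `f` is `λ`-convex: `x ↦ f x - (λ/2)‖x‖²` is convex, expressed via the perturbed
convexity inequality. -/
def LambdaConvex (lam : ℝ) (f : H → EReal) : Prop :=
  ∀ x y : H, ∀ t : ℝ, 0 ≤ t → t ≤ 1 →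
    f ((1 - t) • x + t • y)
      ≤ ((1 - t : ℝ) : EReal) * f x + ((t : ℝ) : EReal) * f y
        - ((lam / 2 * (t * (1 - t)) * ‖x - y‖ ^ 2 : ℝ) : EReal)

/-- The subdifferential of a `λ`-convex function at `x` (contained in the domain of `f`). -/
def subdiff (lam : ℝ) (f : H → EReal) (x : H) : Set H :=
  {p : H | f x ≠ ⊤ ∧
    ∀ y : H, f x + ((⟪p, y - x⟫ + lam / 2 * ‖y - x‖ ^ 2 : ℝ) : EReal) ≤ f y}

/-- `∇f(x)`: the element of minimal norm of `∂f(x)` (junk value `0` if there is none). -/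
def gradMin (lam : ℝ) (f : H → EReal) (x : H) : H :=
  if h : ∃ p ∈ subdiff lam f x, ∀ q ∈ subdiff lam f x, ‖p‖ ≤ ‖q‖ then h.choose else 0

/-- `|∇f|(x) ∈ [0,∞]`, equal to `+∞` when `∂f(x) = ∅` (in particular when `f x = ⊤`). -/
def gradNorm (lam : ℝ) (f : H → EReal) (x : H) : ℝ≥0∞ :=
  if (subdiff lam f x).Nonempty then ENNReal.ofReal ‖gradMin lam f x‖ else ⊤

/-- The resolvent `J_τ(x)`: the minimizer of `y ↦ f y + ‖y-x‖²/(2τ)` (junk `0` if none). -/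
def Jres (f : H → EReal) (τ : ℝ) (x : H) : H :=
  if h : ∃ y : H, ∀ z : H,
      f y + ((‖y - x‖ ^ 2 / (2 * τ) : ℝ) : EReal)
        ≤ f z + ((‖z - x‖ ^ 2 / (2 * τ) : ℝ) : EReal)
  then h.choose else 0

/-- The Moreau–Yosida regularization `f_τ(x) = min_y (f y + ‖y-x‖²/(2τ))`. -/
def moreau (f : H → EReal) (τ : ℝ) (x : H) : ℝ :=
  (f (Jres f τ x)).toReal + ‖Jres f τ x - x‖ ^ 2 / (2 * τ)

/-- `γ` is absolutely continuous on `[a,b]` with an integrable derivative. -/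
abbrev IsACCurve (a b : ℝ) (γ : ℝ → H) : Prop :=
  ∃ g : ℝ → H, IntegrableOn g (Icc a b) ∧ ∀ t ∈ Icc a b, γ t = γ a + ∫ s in a..t, g s

/-- The action `I_f^{[a,b]}(γ) = ∫_a^b (‖γ̇‖² + |∇f|²(γ)) dt ∈ [0,∞]`, set to `+∞` when `γ`
is not absolutely continuous. -/
def actionFn (lam : ℝ) (f : H → EReal) (a b : ℝ) (γ : ℝ → H) : ℝ≥0∞ :=
  if h : IsACCurve a b γ then
    ∫⁻ t in Ioc a b, (ENNReal.ofReal (‖h.choose t‖ ^ 2) + gradNorm lam f (γ t) ^ 2)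
  else ⊤

/-- `Θ_{f,x₀,x₁}`: the action on `[0,1]` with endpoint constraints. -/
def Theta (lam : ℝ) (f : H → EReal) (x0 x1 : H) (γ : ℝ → H) : ℝ≥0∞ :=
  if γ 0 = x0 ∧ γ 1 = x1 then actionFn lam f 0 1 γ else ⊤

/-- `Γ_δ(x₀,x_δ)`: infimum of the action over curves joining the endpoints. -/
def GammaInf (lam : ℝ) (f : H → EReal) (δ : ℝ) (x0 xδ : H) : ℝ≥0∞ :=
  ⨅ (γ : ℝ → H) (_ : γ 0 = x0 ∧ γ δ = xδ), actionFn lam f 0 δ γ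

/-- Mosco convergence of `fh` to `f`: recovery sequences for the strong topology, and the
`liminf` inequality along weakly convergent sequences. -/
def Mosco (fh : ℕ → H → EReal) (f : H → EReal) : Prop :=
  (∀ x : H, ∃ xh : ℕ → H, Tendsto xh atTop (𝓝 x) ∧
      Filter.limsup (fun h => fh h (xh h)) atTop ≤ f x) ∧
  (∀ (xh : ℕ → H) (x : H),
      (∀ p : H, Tendsto (fun h => ⟪xh h, p⟫) atTop (𝓝 ⟪x, p⟫)) →
      f x ≤ Filter.liminf (fun h => fh h (xh h)) atTop)

section AuxLemmas

variable {lam : ℝ} {f : H → EReal} {x : H}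

lemma ereal_toReal_lt_of_lt_coe {z : EReal} {r : ℝ} (hz : z ≠ ⊥) (h : z < (r : EReal)) :
    z.toReal < r := by
  have hzt : z ≠ ⊤ := ne_top_of_lt h
  rw [← EReal.coe_toReal hzt hz] at h
  exact EReal.coe_lt_coe_iff.mp h

lemma ereal_lt_toReal_of_coe_lt {z : EReal} {r : ℝ} (hz : z ≠ ⊤) (h : (r : EReal) < z) :
    r < z.toReal := by
  have hzb : z ≠ ⊥ := ((EReal.bot_lt_coe r).trans h).ne'
  rw [← EReal.coe_toReal hz hzb] at h
  exact EReal.coe_lt_coe_iff.mp h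

lemma subdiff_real {p y : H} (hp : p ∈ subdiff lam f x) (hbot : ∀ z, f z ≠ ⊥) (hy : f y ≠ ⊤) :
    (f x).toReal + (⟪p, y - x⟫ + lam / 2 * ‖y - x‖ ^ 2) ≤ (f y).toReal := by
  obtain ⟨hxt, hineq⟩ := hp
  have h := hineq y
  rw [← EReal.coe_toReal hxt (hbot x), ← EReal.coe_toReal hy (hbot y), ← EReal.coe_add] at h
  exact EReal.coe_le_coe_iff.mp h

lemma mem_subdiff_of_real {p : H} (hbot : ∀ z, f z ≠ ⊥) (hxt : f x ≠ ⊤)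
    (h : ∀ y, f y ≠ ⊤ → (f x).toReal + (⟪p, y - x⟫ + lam / 2 * ‖y - x‖ ^ 2) ≤ (f y).toReal) :
    p ∈ subdiff lam f x := by
  refine ⟨hxt, fun y => ?_⟩
  by_cases hy : f y = ⊤
  · rw [hy]; exact le_top
  · have h' := h y hy
    rw [← EReal.coe_toReal hxt (hbot x), ← EReal.coe_toReal hy (hbot y), ← EReal.coe_add]
    exact_mod_cast h'

lemma subdiff_convex (hbot : ∀ z, f z ≠ ⊥) : Convex ℝ (subdiff lam f x) := by
  intro p hp r hr a b ha hb hab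
  refine mem_subdiff_of_real hbot hp.1 fun y hy => ?_
  have h1 := subdiff_real hp hbot hy
  have h2 := subdiff_real hr hbot hy
  have hin : ⟪a • p + b • r, y - x⟫ = a * ⟪p, y - x⟫ + b * ⟪r, y - x⟫ := by
    rw [inner_add_left, real_inner_smul_left, real_inner_smul_left]
  rw [hin]
  have hb' : b = 1 - a := by linarith
  subst hb'
  nlinarith [mul_le_mul_of_nonneg_left h1 ha, mul_le_mul_of_nonneg_left h2 hb]

lemma subdiff_min_exists (hbot : ∀ z, f z ≠ ⊥) (hne : (subdiff lam f x).Nonempty) :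
    ∃ p ∈ subdiff lam f x, ∀ q ∈ subdiff lam f x, ‖p‖ ≤ ‖q‖ := by
  obtain ⟨p₀, hp₀⟩ := hne
  have hxt : f x ≠ ⊤ := hp₀.1
  have hax := EReal.coe_toReal hxt (hbot x)
  have hset : subdiff lam f x = ⋂ y : H,
      (fun p : H => (((f x).toReal + (⟪p, y - x⟫ + lam / 2 * ‖y - x‖ ^ 2) : ℝ) : EReal)) ⁻¹'
        Set.Iic (f y) := by
    ext p
    simp only [Set.mem_iInter, Set.mem_preimage, Set.mem_Iic, subdiff, Set.mem_setOf_eq]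
    constructor
    · intro h y; rw [EReal.coe_add, hax]; exact h.2 y
    · intro h; refine ⟨hxt, fun y => ?_⟩; have hy := h y; rwa [EReal.coe_add, hax] at hy
  have hclosed : IsClosed (subdiff lam f x) := by
    rw [hset]
    refine isClosed_iInter fun y => IsClosed.preimage ?_ isClosed_Iic
    exact continuous_coe_real_ereal.comp
      (continuous_const.add ((continuous_id.inner continuous_const).add continuous_const))
  obtain ⟨v, hv, hnv⟩ := exists_norm_eq_iInf_of_complete_convex ⟨p₀, hp₀⟩ hclosed.isComplete
    (subdiff_convex hbot) 0
  refine ⟨v, hv, fun q hq => ?_⟩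
  have h2 : (⨅ w : subdiff lam f x, ‖(0 : H) - (w : H)‖) ≤ ‖(0 : H) - q‖ :=
    ciInf_le (⟨0, Set.forall_mem_range.2 fun _ => norm_nonneg _⟩ :
      BddBelow (Set.range fun w : subdiff lam f x => ‖(0 : H) - (w : H)‖)) ⟨q, hq⟩
  calc ‖v‖ = ‖(0 : H) - v‖ := by simp
    _ = ⨅ w : subdiff lam f x, ‖(0 : H) - (w : H)‖ := hnv
    _ ≤ ‖(0 : H) - q‖ := h2
    _ = ‖q‖ := by simp

lemma gradMin_spec (hbot : ∀ z, f z ≠ ⊥) (hne : (subdiff lam f x).Nonempty) :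
    gradMin lam f x ∈ subdiff lam f x ∧ ∀ q ∈ subdiff lam f x, ‖gradMin lam f x‖ ≤ ‖q‖ := by
  have hex := subdiff_min_exists hbot hne
  rw [gradMin, dif_pos hex]
  exact ⟨hex.choose_spec.1, hex.choose_spec.2⟩

lemma clusterPt_le_of_eventually_le {G : Filter ℕ} {u v : ℕ → ℝ} {b c : ℝ}
    (hb : ClusterPt b (Filter.map u G)) (hv : Tendsto v G (𝓝 c))
    (huv : ∀ᶠ h in G, u h ≤ v h) : b ≤ c := by
  by_contra hbc
  push_neg at hbc
  have hM : (c + b) / 2 < b := by linarith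
  have hev : ∀ᶠ h in G, u h ≤ (c + b) / 2 := by
    filter_upwards [huv, hv.eventually_lt_const (by linarith : c < (c + b) / 2)] with h h1 h2
    linarith
  have h1 : {t : ℝ | t ≤ (c + b) / 2} ∈ Filter.map u G := hev
  have h2 : Set.Ioi ((c + b) / 2) ∈ 𝓝 b := Ioi_mem_nhds hM
  obtain ⟨t, ht1, ht2⟩ := (hb.neBot).nonempty_of_mem
    (Filter.inter_mem (Filter.mem_inf_of_left h2) (Filter.mem_inf_of_right h1))
  exact absurd (show t ≤ (c + b) / 2 from ht2) (not_le.mpr ht1)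

end AuxLemmas
set_option maxHeartbeats 1600000 in
/-- liminf inequality for the metric slopes. -/
theorem statement3 (lam : ℝ) (fh : ℕ → H → EReal) (f : H → EReal)
    (hfh_proper : ∀ h, ProperFn (fh h)) (hfh_conv : ∀ h, LambdaConvex lam (fh h))
    (hfh_lsc : ∀ h, LowerSemicontinuous (fh h))
    (hf_proper : ProperFn f) (hf_conv : LambdaConvex lam f) (hf_lsc : LowerSemicontinuous f)
    (hlimsup : ∀ x : H, ∃ yh : ℕ → H, Tendsto yh atTop (𝓝 x) ∧
      Filter.limsup (fun h => fh h (yh h)) atTop ≤ f x)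
    (hliminf : ∀ (x : H) (xh : ℕ → H), Tendsto xh atTop (𝓝 x) →
      f x ≤ Filter.liminf (fun h => fh h (xh h)) atTop)
    (x : H) (xh : ℕ → H) (hx : Tendsto xh atTop (𝓝 x)) :
    gradNorm lam f x ≤ Filter.liminf (fun h => gradNorm lam (fh h) (xh h)) atTop := by
  have key : ∀ R : ℝ, Filter.liminf (fun h => gradNorm lam (fh h) (xh h)) atTop
      < ENNReal.ofReal R → gradNorm lam f x ≤ ENNReal.ofReal R := by
    intro R hR
    have hR0 : 0 < R := by
      by_contra hR0
      push_neg at hR0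
      rw [ENNReal.ofReal_eq_zero.mpr hR0] at hR
      simp at hR
    have hfreq := Filter.frequently_lt_of_liminf_lt (h := hR)
    set S : Set ℕ := {h | gradNorm lam (fh h) (xh h) < ENNReal.ofReal R} with hSdef
    set G : Filter ℕ := atTop ⊓ 𝓟 S with hGdef
    haveI hGne : G.NeBot := Filter.frequently_iff_neBot.mp hfreq
    have hGle : G ≤ atTop := inf_le_left
    set q : ℕ → H := fun h => gradMin lam (fh h) (xh h) with hqdef
    have hSmem : ∀ h ∈ S, q h ∈ subdiff lam (fh h) (xh h) ∧ ‖q h‖ ≤ R := by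
      intro h hh
      have hh' : gradNorm lam (fh h) (xh h) < ENNReal.ofReal R := hh
      have hne : (subdiff lam (fh h) (xh h)).Nonempty := by
        by_contra hempty
        have hteq : gradNorm lam (fh h) (xh h) = ⊤ := by rw [gradNorm, if_neg hempty]
        rw [hteq] at hh'
        exact absurd hh' not_top_lt
      have hspec := gradMin_spec ((hfh_proper h).2) hne
      have heq : gradNorm lam (fh h) (xh h) = ENNReal.ofReal ‖q h‖ := by
        rw [gradNorm, if_pos hne]
      rw [heq] at hh'
      exact ⟨hspec.1, ((ENNReal.ofReal_lt_ofReal_iff_of_nonneg (norm_nonneg _)).mp hh').le⟩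
    have hSG : ∀ᶠ h in G, h ∈ S := Filter.mem_inf_of_right (Filter.mem_principal_self S)
    have hqG : ∀ᶠ h in G, q h ∈ subdiff lam (fh h) (xh h) ∧ ‖q h‖ ≤ R := by
      filter_upwards [hSG] with h hh using hSmem h hh
    -- weak-* cluster point of the subgradients
    set Φ : ℕ → WeakDual ℝ H :=
      fun h => StrongDual.toWeakDual (InnerProductSpace.toDual ℝ H (q h)) with hΦdef
    have hFle : Filter.map Φ G ≤
        𝓟 (WeakDual.toStrongDual ⁻¹' Metric.closedBall (0 : StrongDual ℝ H) R) := by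
      refine Filter.le_principal_iff.mpr (Filter.mem_map.mpr ?_)
      have hev : ∀ᶠ h in G, Φ h ∈
          (WeakDual.toStrongDual ⁻¹' Metric.closedBall (0 : StrongDual ℝ H) R) := by
        filter_upwards [hqG] with h hh
        simp only [Set.mem_preimage, mem_closedBall_zero_iff]
        show ‖InnerProductSpace.toDual ℝ H (q h)‖ ≤ R
        simpa using hh.2
      exact hev
    haveI : (Filter.map Φ G).NeBot := Filter.NeBot.map hGne Φ
    obtain ⟨φ, hφK, hφcl⟩ :=
      (WeakDual.isCompact_closedBall (𝕜 := ℝ) (0 : StrongDual ℝ H) R).exists_clusterPt hFle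
    set p : H := (InnerProductSpace.toDual ℝ H).symm (WeakDual.toStrongDual φ) with hpdef
    have hcluster : ∀ v : H, ClusterPt (⟪p, v⟫) (Filter.map (fun h => ⟪q h, v⟫) G) := by
      intro v
      have h1 : ClusterPt (φ v) (Filter.map (fun ψ : WeakDual ℝ H => ψ v) (Filter.map Φ G)) :=
        hφcl.map (WeakDual.eval_continuous v).continuousAt Filter.tendsto_map
      have h2 : ⟪p, v⟫ = φ v := by
        rw [hpdef, ← InnerProductSpace.toDual_apply_apply, LinearIsometryEquiv.apply_symm_apply]
        rfl
      rw [Filter.map_map] at h1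
      have h3 : ((fun ψ : WeakDual ℝ H => ψ v) ∘ Φ) = fun h => ⟪q h, v⟫ := by
        funext h
        show (InnerProductSpace.toDual ℝ H (q h)) v = _
        exact InnerProductSpace.toDual_apply_apply
      rw [h3] at h1
      rw [h2]
      exact h1
    -- bound on the norm of the cluster point
    have hpR : ‖p‖ ≤ R := by
      have hineq : ⟪p, p⟫ ≤ R * ‖p‖ := by
        refine clusterPt_le_of_eventually_le (hcluster p) tendsto_const_nhds ?_
        filter_upwards [hqG] with h hh
        exact (real_inner_le_norm _ _).trans (mul_le_mul_of_nonneg_right hh.2 (norm_nonneg _))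
      rw [real_inner_self_eq_norm_sq] at hineq
      by_contra hcon
      push_neg at hcon
      nlinarith [norm_nonneg p]
    -- f x is finite
    obtain ⟨y₀, hy₀⟩ := hf_proper.1
    obtain ⟨z, hz_t, hz_ls⟩ := hlimsup y₀
    have hfy₀ : f y₀ = (((f y₀).toReal : ℝ) : EReal) := (EReal.coe_toReal hy₀ (hf_proper.2 y₀)).symm
    have e1' : ∀ᶠ h in atTop, fh h (z h) < (((f y₀).toReal + 1 : ℝ) : EReal) := by
      refine Filter.eventually_lt_of_limsup_lt (lt_of_le_of_lt hz_ls ?_)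
      rw [hfy₀]
      exact_mod_cast (lt_add_one ((f y₀).toReal))
    have hwz : Tendsto (fun h => z h - xh h) atTop (𝓝 (y₀ - x)) := hz_t.sub hx
    have e2' : ∀ᶠ h in atTop, ‖z h - xh h‖ < ‖y₀ - x‖ + 1 :=
      hwz.norm.eventually_lt_const (lt_add_one _)
    set M : ℝ := ((f y₀).toReal + 1) + R * (‖y₀ - x‖ + 1) + |lam| / 2 * (‖y₀ - x‖ + 1) ^ 2
      with hMdef
    have hevM : ∀ᶠ h in G, fh h (xh h) ≤ ((M : ℝ) : EReal) := by
      filter_upwards [e1'.filter_mono hGle, e2'.filter_mono hGle, hqG] with h h1 h2 hq'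
      have hzt : fh h (z h) ≠ ⊤ := ne_top_of_lt h1
      have hsub := subdiff_real hq'.1 ((hfh_proper h).2) hzt
      have hb1 : (fh h (z h)).toReal < (f y₀).toReal + 1 :=
        ereal_toReal_lt_of_lt_coe ((hfh_proper h).2 _) h1
      have hw0 : (0 : ℝ) ≤ ‖z h - xh h‖ := norm_nonneg _
      have hinb : |⟪q h, z h - xh h⟫| ≤ ‖q h‖ * ‖z h - xh h‖ := abs_real_inner_le_norm _ _
      have hqn : ‖q h‖ ≤ R := hq'.2
      have haM : (fh h (xh h)).toReal ≤ M := by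
        have hsq : ‖z h - xh h‖ ^ 2 ≤ (‖y₀ - x‖ + 1) ^ 2 := by nlinarith [h2.le]
        have hlam : -(lam / 2) * ‖z h - xh h‖ ^ 2 ≤ |lam| / 2 * (‖y₀ - x‖ + 1) ^ 2 := by
          have h5 : -(lam / 2) ≤ |lam| / 2 := by
            rw [neg_le]
            have := abs_nonneg lam
            have := neg_abs_le lam
            linarith
          nlinarith [sq_nonneg (‖z h - xh h‖), abs_nonneg lam]
        have hip : -⟪q h, z h - xh h⟫ ≤ R * (‖y₀ - x‖ + 1) := by
          have : -⟪q h, z h - xh h⟫ ≤ ‖q h‖ * ‖z h - xh h‖ := by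
            have := abs_le.mp hinb
            linarith [this.1]
          have hqn0 : (0 : ℝ) ≤ ‖q h‖ := norm_nonneg _
          nlinarith [h2.le]
        rw [hMdef]
        linarith
      calc fh h (xh h) = (((fh h (xh h)).toReal : ℝ) : EReal) :=
            (EReal.coe_toReal hq'.1.1 ((hfh_proper h).2 _)).symm
        _ ≤ ((M : ℝ) : EReal) := by exact_mod_cast haM
    have hfx_le : f x ≤ ((M : ℝ) : EReal) :=
      (hliminf x xh hx).trans
        (Filter.liminf_le_of_frequently_le' ((hevM.frequently).filter_mono hGle))
    have hfx_top : f x ≠ ⊤ := (lt_of_le_of_lt hfx_le (EReal.coe_lt_top M)).ne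
    have hfx : f x = (((f x).toReal : ℝ) : EReal) := (EReal.coe_toReal hfx_top (hf_proper.2 x)).symm
    -- membership of p in the subdifferential of f at x
    have hpmem : p ∈ subdiff lam f x := by
      refine mem_subdiff_of_real (hf_proper.2) hfx_top fun y hy => ?_
      obtain ⟨ax, hax⟩ : ∃ a : ℝ, a = (f x).toReal := ⟨_, rfl⟩
      obtain ⟨by', hby'2⟩ : ∃ b : ℝ, b = (f y).toReal := ⟨_, rfl⟩
      obtain ⟨c, hcdef⟩ : ∃ c : ℝ, c = by' - ax - lam / 2 * ‖y - x‖ ^ 2 := ⟨_, rfl⟩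
      have hfx' : f x = ((ax : ℝ) : EReal) := by rw [hax]; exact hfx
      obtain ⟨yh, hyh_t, hyh_ls⟩ := hlimsup y
      have hw : Tendsto (fun h => yh h - xh h) atTop (𝓝 (y - x)) := hyh_t.sub hx
      have hεbound : ∀ ε : ℝ, 0 < ε → ⟪p, y - x⟫ ≤ c + ε := by
        intro ε hε
        set v : ℕ → ℝ := fun h =>
          (by' + ε / 2) - (ax - ε / 2) - lam / 2 * ‖yh h - xh h‖ ^ 2
            + R * ‖(y - x) - (yh h - xh h)‖ with hvdef
        have hv : Tendsto v G (𝓝 (c + ε)) := by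
          have hlimv : Tendsto v G (𝓝 ((by' + ε / 2) - (ax - ε / 2) - lam / 2 * ‖y - x‖ ^ 2
              + R * ‖(y - x) - (y - x)‖)) := by
            refine Tendsto.add (Tendsto.sub tendsto_const_nhds ?_) ?_
            · exact (((hw.mono_left hGle).norm.pow 2).const_mul (lam / 2))
            · exact ((tendsto_const_nhds.sub (hw.mono_left hGle)).norm.const_mul R)
          have heqc : (by' + ε / 2) - (ax - ε / 2) - lam / 2 * ‖y - x‖ ^ 2
              + R * ‖(y - x) - (y - x)‖ = c + ε := by
            rw [hcdef]
            simp
            ring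
          rwa [heqc] at hlimv
        refine clusterPt_le_of_eventually_le (hcluster (y - x)) hv ?_
        have hby : f y = ((by' : ℝ) : EReal) := by
          rw [hby'2]; exact (EReal.coe_toReal hy (hf_proper.2 y)).symm
        have e1 : ∀ᶠ h in atTop, fh h (yh h) < ((by' + ε / 2 : ℝ) : EReal) := by
          refine Filter.eventually_lt_of_limsup_lt (lt_of_le_of_lt hyh_ls ?_)
          rw [hby]
          exact_mod_cast (by linarith : by' < by' + ε / 2)
        have e2 : ∀ᶠ h in atTop, ((ax - ε / 2 : ℝ) : EReal) < fh h (xh h) := by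
          refine Filter.eventually_lt_of_lt_liminf (lt_of_lt_of_le ?_ (hliminf x xh hx))
          rw [hfx']
          exact_mod_cast (by linarith : ax - ε / 2 < ax)
        filter_upwards [e1.filter_mono hGle, e2.filter_mono hGle, hqG] with h h1 h2 hq'
        have hyt : fh h (yh h) ≠ ⊤ := ne_top_of_lt h1
        have hsub := subdiff_real hq'.1 ((hfh_proper h).2) hyt
        have hb1 : (fh h (yh h)).toReal < by' + ε / 2 :=
          ereal_toReal_lt_of_lt_coe ((hfh_proper h).2 _) h1
        have ha1 : ax - ε / 2 < (fh h (xh h)).toReal :=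
          ereal_lt_toReal_of_coe_lt hq'.1.1 h2
        have hinner : ⟪q h, y - x⟫ = ⟪q h, yh h - xh h⟫ + ⟪q h, (y - x) - (yh h - xh h)⟫ := by
          rw [← inner_add_right]
          congr 1
          abel
        have hCS : ⟪q h, (y - x) - (yh h - xh h)⟫ ≤ R * ‖(y - x) - (yh h - xh h)‖ :=
          (real_inner_le_norm _ _).trans (mul_le_mul_of_nonneg_right hq'.2 (norm_nonneg _))
        rw [hvdef]
        rw [hinner]
        simp only []
        linarith
      have hple : ⟪p, y - x⟫ ≤ c := by
        by_contra hlt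
        push_neg at hlt
        have := hεbound ((⟪p, y - x⟫ - c) / 2) (by linarith)
        linarith
      rw [hcdef] at hple
      rw [← hax, ← hby'2]
      linarith
    -- conclusion
    have hne : (subdiff lam f x).Nonempty := ⟨p, hpmem⟩
    have hspec := gradMin_spec (hf_proper.2) hne
    have heq : gradNorm lam f x = ENNReal.ofReal ‖gradMin lam f x‖ := by
      rw [gradNorm, if_pos hne]
    rw [heq]
    calc ENNReal.ofReal ‖gradMin lam f x‖ ≤ ENNReal.ofReal ‖p‖ :=
          ENNReal.ofReal_le_ofReal (hspec.2 p hpmem)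
      _ ≤ ENNReal.ofReal R := ENNReal.ofReal_le_ofReal hpR
  by_contra hcon
  push_neg at hcon
  obtain ⟨r, -, hr1, hr2⟩ := ENNReal.lt_iff_exists_real_btwn.mp hcon
  exact absurd hr2 (not_lt.mpr (key r hr1))

end
end

section
/- Let H be a real Hilbert space, λ ∈ ℝ, and let f : H → (-∞,∞] be proper, λ-convex and lower semicontinuous. Let τ > 0 be admissible, i.e. τ < −1/λ if λ < 0. Then the Moreau–Yosida regularization f_τ is (Fréchet) differentiable at every point of H, and for all x ∈ H one has ∇f_τ(x) = (x − J_τ(x))/τ, and this vector belongs to ∂f(J_τ(x)). -/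
open Filter Topology MeasureTheory Set
open scoped ENNReal RealInnerProductSpace

noncomputable section

attribute [local instance] Classical.propDecidable

variable {H : Type*} [NormedAddCommGroup H] [InnerProductSpace ℝ H] [CompleteSpace H]

private lemma ereal_add_coe_ne_bot {a : EReal} (ha : a ≠ ⊥) (r : ℝ) : a + (r : EReal) ≠ ⊥ := by
  induction a using EReal.rec with
  | bot => exact absurd rfl ha
  | coe s => rw [← EReal.coe_add]; exact EReal.coe_ne_bot _
  | top => rw [EReal.top_add_coe]; simp

private lemma ereal_add_coe_ne_top {a : EReal} (ha : a ≠ ⊤) (r : ℝ) : a + (r : EReal) ≠ ⊤ := by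
  induction a using EReal.rec with
  | bot => rw [EReal.bot_add]; simp
  | coe s => rw [← EReal.coe_add]; exact EReal.coe_ne_top _
  | top => exact absurd rfl ha

private lemma ereal_ne_top_of_add (a : EReal) (r : ℝ) (h : a + (r : EReal) ≠ ⊤) : a ≠ ⊤ := by
  intro hh; rw [hh, EReal.top_add_coe] at h; exact h rfl

private lemma q_combo (a b x : H) (t : ℝ) :
    ‖(1-t)•a + t•b - x‖^2 = (1-t)*‖a-x‖^2 + t*‖b-x‖^2 - t*(1-t)*‖a-b‖^2 := by
  have h1 : (1-t)•a + t•b - x = (a-x) + t•(b-a) := by module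
  have h2 : b - x = (a-x) + (b-a) := by abel
  have h3 : ‖a-b‖ = ‖b-a‖ := norm_sub_rev a b
  rw [h1, h2, h3, norm_add_sq_real, norm_add_sq_real, real_inner_smul_right, norm_smul,
    Real.norm_eq_abs, mul_pow, sq_abs]
  ring

private lemma norm_add_smul_sq (u v : H) (t : ℝ) :
    ‖u + t•v‖^2 = ‖u‖^2 + 2*(t*⟪u,v⟫) + t^2*‖v‖^2 := by
  rw [norm_add_sq_real, real_inner_smul_right, norm_smul, Real.norm_eq_abs, mul_pow, sq_abs]

private lemma le_of_forall_small (a b K : ℝ) (h : ∀ t : ℝ, 0 < t → t ≤ 1 → a ≤ b + t * K) :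
    a ≤ b := by
  by_contra hab
  push_neg at hab
  have hK : (0:ℝ) < |K| + 1 := by positivity
  have hd : 0 < (a - b)/(2*(|K|+1)) := div_pos (by linarith) (by positivity)
  set t := min 1 ((a - b)/(2*(|K|+1))) with ht
  have ht0 : 0 < t := lt_min one_pos hd
  have h0 := h t ht0 (min_le_left _ _)
  have h1 : t * K ≤ t * (|K|+1) :=
    mul_le_mul_of_nonneg_left (by linarith [le_abs_self K]) ht0.le
  have h2 : t ≤ (a-b)/(2*(|K|+1)) := min_le_right _ _
  have h3 : t * (|K|+1) ≤ (a-b)/2 := by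
    calc t*(|K|+1) ≤ ((a-b)/(2*(|K|+1)))*(|K|+1) := mul_le_mul_of_nonneg_right h2 hK.le
      _ = (a-b)/2 := by field_simp
  linarith

private lemma lsc_add_cont {f : H → EReal} (hb : ∀ y, f y ≠ ⊥) (hf : LowerSemicontinuous f)
    {q : H → ℝ} (hq : Continuous q) :
    LowerSemicontinuous fun y => f y + ((q y : ℝ) : EReal) := by
  intro x c hc
  induction c using EReal.rec with
  | bot =>
    filter_upwards with y
    exact Ne.bot_lt (ereal_add_coe_ne_bot (hb y) _)
  | top => exact absurd hc (by simp)
  | coe r =>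
    -- choose d real with coe d < f x and r < d + q x
    obtain ⟨d, hd1, hd2⟩ : ∃ d : ℝ, (d : EReal) < f x ∧ r < d + q x := by
      by_cases hfx : f x = ⊤
      · exact ⟨r - q x + 1, by rw [hfx]; exact EReal.coe_lt_top _, by linarith⟩
      · set v := (f x).toReal with hv
        have hfx' : f x = (v : EReal) := (EReal.coe_toReal hfx (hb x)).symm
        have hc' : (r : EReal) < f x + ((q x : ℝ) : EReal) := hc
        rw [hfx', ← EReal.coe_add, EReal.coe_lt_coe_iff] at hc'
        refine ⟨(r - q x + v)/2, ?_, by linarith⟩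
        rw [hfx', EReal.coe_lt_coe_iff]
        linarith
    set δ := d + q x - r with hδ
    have hδ0 : 0 < δ := by linarith
    have hev1 := hf x (d : EReal) hd1
    have hev2 : ∀ᶠ y in 𝓝 x, q x - δ < q y :=
      (hq.tendsto x).eventually (eventually_gt_nhds (by linarith))
    filter_upwards [hev1, hev2] with y h1 h2
    have : ((d + (q x - δ) : ℝ) : EReal) < f y + ((q y : ℝ) : EReal) := by
      rw [EReal.coe_add]
      exact EReal.add_lt_add h1 (EReal.coe_lt_coe_iff.2 h2)
    have hr : (r : ℝ) = d + (q x - δ) := by rw [hδ]; ring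
    rw [hr]; exact this

set_option maxHeartbeats 1000000 in
private lemma exists_min {μ : ℝ} (hμ : 0 < μ) (Φ : H → EReal)
    (hnb : ∀ y, Φ y ≠ ⊥) (y0 : H) (hy0 : Φ y0 ≠ ⊤)
    (hcvx : ∀ a b : H, ∀ t : ℝ, 0 ≤ t → t ≤ 1 → Φ a ≠ ⊤ → Φ b ≠ ⊤ →
      Φ ((1-t)•a + t•b)
        ≤ (((1-t)*(Φ a).toReal + t*(Φ b).toReal - μ/2*(t*(1-t))*‖a-b‖^2 : ℝ) : EReal))
    (hlsc : LowerSemicontinuous Φ) :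
    ∃ y, ∀ z, Φ y ≤ Φ z := by
  classical
  set m0 : ℝ := (Φ y0).toReal with hm0
  have hy0' : Φ y0 = (m0 : EReal) := (EReal.coe_toReal hy0 (hnb y0)).symm
  -- the epigraph
  set E : Set (H × ℝ) := {p | Φ p.1 ≤ (p.2 : EReal)} with hE
  have hconvE : Convex ℝ E := by
    intro p hp q hq a b ha hb hab
    have hp1 : Φ p.1 ≠ ⊤ := fun h => by
      simp only [hE, mem_setOf_eq, h, top_le_iff] at hp; exact EReal.coe_ne_top _ hp
    have hq1 : Φ q.1 ≠ ⊤ := fun h => by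
      simp only [hE, mem_setOf_eq, h, top_le_iff] at hq; exact EReal.coe_ne_top _ hq
    have hp2 : (Φ p.1).toReal ≤ p.2 :=
      EReal.toReal_le_toReal hp (hnb p.1) (EReal.coe_ne_top _) |>.trans_eq (EReal.toReal_coe _)
    have hq2 : (Φ q.1).toReal ≤ q.2 :=
      EReal.toReal_le_toReal hq (hnb q.1) (EReal.coe_ne_top _) |>.trans_eq (EReal.toReal_coe _)
    have ha' : a = 1 - b := by linarith
    have hkey := hcvx p.1 q.1 b hb (by linarith) hp1 hq1
    show Φ (a • p.1 + b • q.1) ≤ ((a * p.2 + b * q.2 : ℝ) : EReal)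
    rw [ha']
    refine hkey.trans ?_
    rw [EReal.coe_le_coe_iff]
    have hnn : 0 ≤ μ/2*(b*(1-b))*‖p.1-q.1‖^2 := by
      have : 0 ≤ b * (1-b) := mul_nonneg hb (by linarith)
      positivity
    nlinarith [mul_le_mul_of_nonneg_left hp2 (show (0:ℝ) ≤ 1 - b by linarith),
      mul_le_mul_of_nonneg_left hq2 hb]
  have hclosedE : IsClosed E := by
    rw [← isOpen_compl_iff]
    have : Eᶜ = ⋃ c : ℝ, ((fun p : H × ℝ => p.1) ⁻¹' (Φ ⁻¹' Ioi (c : EReal))) ∩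
        ((fun p : H × ℝ => p.2) ⁻¹' Iio c) := by
      ext p
      simp only [mem_compl_iff, hE, mem_setOf_eq, not_le, mem_iUnion, mem_inter_iff,
        mem_preimage, mem_Ioi, mem_Iio]
      constructor
      · intro h
        obtain ⟨z, hz1, hz2⟩ := exists_between h
        have hzt : z ≠ ⊤ := fun hzt => by rw [hzt] at hz2; exact (not_top_lt hz2).elim
        have hzb : z ≠ ⊥ := fun hzb => by rw [hzb] at hz1; exact (not_lt_bot hz1).elim
        refine ⟨z.toReal, ?_, ?_⟩
        · rwa [EReal.coe_toReal hzt hzb]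
        · rw [← EReal.coe_lt_coe_iff, EReal.coe_toReal hzt hzb]; exact hz1
      · rintro ⟨c, h1, h2⟩
        exact (EReal.coe_lt_coe_iff.2 h2).trans h1
    rw [this]
    refine isOpen_iUnion fun c => IsOpen.inter ?_ ?_
    · exact (lowerSemicontinuous_iff_isOpen_preimage.1 hlsc _).preimage continuous_fst
    · exact isOpen_Iio.preimage continuous_snd
  have hmem : ((y0, m0 - 1) : H × ℝ) ∉ E := by
    simp only [hE, mem_setOf_eq, hy0', EReal.coe_le_coe_iff, not_le]
    linarith
  obtain ⟨F, u, hFu, hFE⟩ := geometric_hahn_banach_point_closed hconvE hclosedE hmem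
  set aa : ℝ := F ((0 : H), (1 : ℝ)) with haa
  have hsplit : ∀ (y : H) (r : ℝ), F (y, r) = F (y, 0) + r * aa := by
    intro y r
    have : ((y, r) : H × ℝ) = (y, (0:ℝ)) + r • ((0:H), (1:ℝ)) := by
      simp [Prod.ext_iff]
    rw [this, ContinuousLinearMap.map_add, ContinuousLinearMap.map_smul, smul_eq_mul]
  have hy0E : ∀ r : ℝ, m0 ≤ r → ((y0, r) : H × ℝ) ∈ E := by
    intro r hr
    simp only [hE, mem_setOf_eq, hy0']
    exact_mod_cast hr
  have haa_pos : 0 < aa := by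
    rcases lt_trichotomy aa 0 with h | h | h
    · exfalso
      set r : ℝ := max m0 ((u - F (y0, 0))/aa + 1) with hr
      have h1 := hFE _ (hy0E r (le_max_left _ _))
      rw [hsplit] at h1
      have h2 : (u - F (y0, 0))/aa + 1 ≤ r := le_max_right _ _
      have h3 : r * aa ≤ ((u - F (y0, 0))/aa + 1) * aa :=
        mul_le_mul_of_nonpos_right h2 h.le
      have h4 : ((u - F (y0, 0))/aa + 1) * aa = (u - F (y0, 0)) + aa := by
        field_simp [h.ne]
      linarith
    · exfalso
      have h1 := hFE _ (hy0E m0 le_rfl)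
      rw [hsplit] at h1
      have h2 : F (y0, m0 - 1) = F (y0, 0) + (m0 - 1) * aa := hsplit y0 (m0 - 1)
      rw [h2, h] at hFu
      rw [h] at h1
      linarith
    · exact h
  -- affine minorant
  have hminor : ∀ y : H, Φ y ≠ ⊤ → (u - F (y, 0))/aa ≤ (Φ y).toReal := by
    intro y hy
    have hyE : ((y, (Φ y).toReal) : H × ℝ) ∈ E := by
      simp only [hE, mem_setOf_eq]
      rw [EReal.coe_toReal hy (hnb y)]
    have := hFE _ hyE
    rw [hsplit] at this
    rw [div_le_iff₀ haa_pos]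
    nlinarith
  have hFb : ∀ y : H, |F (y, 0)| ≤ ‖F‖ * ‖y‖ := by
    intro y
    calc |F (y, 0)| = ‖F (y, 0)‖ := rfl
      _ ≤ ‖F‖ * ‖((y, (0:ℝ)) : H × ℝ)‖ := F.le_opNorm _
      _ = ‖F‖ * ‖y‖ := by
          congr 1
          simp [Prod.norm_def]
  -- quadratic lower bound
  set P : ℝ := (u - ‖F‖*‖y0‖)/aa with hP
  set Q : ℝ := ‖F‖/aa with hQ
  have hQnn : 0 ≤ Q := by positivity
  set B : ℝ := (2*P - m0) - (2*Q)^2/μ with hB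
  have hlower : ∀ y : H, Φ y ≠ ⊤ → B ≤ (Φ y).toReal := by
    intro y hy
    set s : ℝ := ‖y0 - y‖ with hs
    have hsnn : 0 ≤ s := norm_nonneg _
    have hmid := hcvx y0 y (1/2) (by norm_num) (by norm_num) hy0 hy
    set z : H := (1-(1/2:ℝ))•y0 + (1/2:ℝ)•y with hz
    have hznt : Φ z ≠ ⊤ := fun h => by
      rw [h] at hmid; exact EReal.coe_ne_top _ (top_le_iff.1 hmid)
    have hmid' : (Φ z).toReal ≤ (1-1/2)*m0 + (1/2)*(Φ y).toReal - μ/2*((1/2)*(1-1/2))*s^2 :=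
      (EReal.toReal_le_toReal hmid (hnb z) (EReal.coe_ne_top _)).trans_eq (EReal.toReal_coe _)
    have hzmin := hminor z hznt
    have hzn : ‖z‖ ≤ ‖y0‖ + s := by
      have e1 : |1-(1/2:ℝ)| = 1/2 := by norm_num
      have e2 : |(1/2:ℝ)| = 1/2 := by norm_num
      have h1 : ‖z‖ ≤ (1/2)*‖y0‖ + (1/2)*‖y‖ := by
        rw [hz]
        refine (norm_add_le _ _).trans ?_
        rw [norm_smul, norm_smul, Real.norm_eq_abs, Real.norm_eq_abs, e1, e2]
      have h2 : ‖y‖ ≤ ‖y0‖ + s := by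
        have := norm_sub_norm_le y y0
        rw [norm_sub_rev, ← hs] at this
        linarith
      linarith
    have hFz : F (z, 0) ≤ ‖F‖ * (‖y0‖ + s) := by
      have h1 := (abs_le.1 (hFb z)).2
      have h2 := mul_le_mul_of_nonneg_left hzn (norm_nonneg F)
      linarith
    have hstep : P - Q*s ≤ (Φ z).toReal := by
      refine le_trans ?_ hzmin
      have h9 : u - ‖F‖*(‖y0‖+s) ≤ u - F (z,0) := by linarith
      have h10 : P - Q*s = (u - ‖F‖*(‖y0‖+s)) * aa⁻¹ := by
        rw [hP, hQ]
        field_simp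
        ring
      rw [h10, div_eq_mul_inv]
      exact mul_le_mul_of_nonneg_right h9 (inv_nonneg.2 haa_pos.le)
    -- combine
    have hv : 2*P - 2*Q*s - m0 + μ/4*s^2 ≤ (Φ y).toReal := by nlinarith
    have hq2 : μ/4*s^2 - 2*Q*s + (2*Q)^2/μ = (μ*s/2 - 2*Q)^2/μ := by
      field_simp
      ring
    have hq3 : (0:ℝ) ≤ μ/4*s^2 - 2*Q*s + (2*Q)^2/μ := by
      rw [hq2]; positivity
    rw [hB]
    linarith
  -- infimum
  set S : Set ℝ := {r | ∃ y : H, Φ y ≤ (r : EReal)} with hS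
  have hSne : S.Nonempty := ⟨m0, y0, le_of_eq hy0'⟩
  have hSbdd : BddBelow S := by
    refine ⟨B, fun r hr => ?_⟩
    obtain ⟨y, hy⟩ := hr
    have hynt : Φ y ≠ ⊤ := fun h => by
      rw [h, top_le_iff] at hy; exact EReal.coe_ne_top _ hy
    have := hlower y hynt
    have h2 : (Φ y).toReal ≤ r :=
      (EReal.toReal_le_toReal hy (hnb y) (EReal.coe_ne_top _)).trans_eq (EReal.toReal_coe _)
    linarith
  set m : ℝ := sInf S with hm
  have hmS : ∀ y : H, Φ y ≠ ⊤ → m ≤ (Φ y).toReal := by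
    intro y hy
    exact csInf_le hSbdd ⟨y, le_of_eq (EReal.coe_toReal hy (hnb y)).symm⟩
  have hmle : ∀ z : H, (m : EReal) ≤ Φ z := by
    intro z
    by_cases hz : Φ z = ⊤
    · rw [hz]; exact le_top
    · rw [← EReal.coe_toReal hz (hnb z), EReal.coe_le_coe_iff]
      exact hmS z hz
  -- minimizing sequence
  have hseq : ∀ n : ℕ, ∃ y : H, Φ y ≤ ((m + 1/(n+1) : ℝ) : EReal) := by
    intro n
    have h1 : m < m + 1/(n+1) := by
      have : (0:ℝ) < 1/(n+1) := by positivity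
      linarith
    obtain ⟨r, hrS, hr⟩ := (csInf_lt_iff hSbdd hSne).1 h1
    obtain ⟨y, hy⟩ := hrS
    exact ⟨y, hy.trans (EReal.coe_le_coe_iff.2 hr.le)⟩
  choose ys hys using hseq
  have hysnt : ∀ n, Φ (ys n) ≠ ⊤ := fun n h => by
    have h2 := hys n
    rw [h, top_le_iff] at h2
    exact EReal.coe_ne_top _ h2
  have hysr : ∀ n, (Φ (ys n)).toReal ≤ m + 1/(n+1) := fun n =>
    (EReal.toReal_le_toReal (hys n) (hnb _) (EReal.coe_ne_top _)).trans_eq (EReal.toReal_coe _)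
  have hysm : ∀ n, m ≤ (Φ (ys n)).toReal := fun n => hmS _ (hysnt n)
  -- Cauchy
  have hdist : ∀ N n k : ℕ, N ≤ n → N ≤ k →
      dist (ys n) (ys k) ≤ Real.sqrt (8/μ * (1/(N+1))) := by
    intro N n k hn hk
    have hmid := hcvx (ys n) (ys k) (1/2) (by norm_num) (by norm_num) (hysnt n) (hysnt k)
    set z : H := (1-(1/2:ℝ))•(ys n) + (1/2:ℝ)•(ys k) with hz
    have hznt : Φ z ≠ ⊤ := fun h => by
      rw [h] at hmid; exact EReal.coe_ne_top _ (top_le_iff.1 hmid)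
    have hmid' : (Φ z).toReal ≤ (1-1/2)*(Φ (ys n)).toReal + (1/2)*(Φ (ys k)).toReal
        - μ/2*((1/2)*(1-1/2))*‖ys n - ys k‖^2 :=
      (EReal.toReal_le_toReal hmid (hnb z) (EReal.coe_ne_top _)).trans_eq (EReal.toReal_coe _)
    have hmz := hmS z hznt
    have h1n : (1:ℝ)/(n+1) ≤ 1/(N+1) := by
      apply one_div_le_one_div_of_le (by positivity)
      have : (N:ℝ) ≤ n := Nat.cast_le.2 hn
      linarith
    have h1k : (1:ℝ)/(k+1) ≤ 1/(N+1) := by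
      apply one_div_le_one_div_of_le (by positivity)
      have : (N:ℝ) ≤ k := Nat.cast_le.2 hk
      linarith
    have hsq : ‖ys n - ys k‖^2 ≤ 8/μ * (1/(N+1)) := by
      have h2 := hysr n
      have h3 := hysr k
      have key : μ/8 * ‖ys n - ys k‖^2 ≤ 1/(N+1) := by nlinarith
      have key2 := mul_le_mul_of_nonneg_left key (show (0:ℝ) ≤ 8/μ by positivity)
      have h81 : 8/μ * (μ/8) = 1 := by field_simp
      calc ‖ys n - ys k‖^2 = 8/μ * (μ/8 * ‖ys n - ys k‖^2) := by
            rw [← mul_assoc, h81, one_mul]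
        _ ≤ 8/μ * (1/(N+1)) := key2
    rw [dist_eq_norm]
    have := Real.sqrt_le_sqrt hsq
    rwa [Real.sqrt_sq (norm_nonneg _)] at this
  have hcauchy : CauchySeq ys := by
    refine cauchySeq_of_le_tendsto_0 (fun N : ℕ => Real.sqrt (8/μ * (1/(N+1))))
      (fun n k N hn hk => hdist N n k hn hk) ?_
    · have h0 : Tendsto (fun N : ℕ => 8/μ * (1/(N+1) : ℝ)) atTop (𝓝 0) := by
        have := tendsto_one_div_add_atTop_nhds_zero_nat (𝕜 := ℝ)
        have h := this.const_mul (8/μ)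
        simpa using h
      have := (Real.continuous_sqrt.tendsto 0).comp h0
      simpa [Function.comp_def] using this
  obtain ⟨yl, hyl⟩ := cauchySeq_tendsto_of_complete hcauchy
  refine ⟨yl, fun z => ?_⟩
  have hΦyl : Φ yl ≤ (m : EReal) := by
    by_contra hcon
    push_neg at hcon
    obtain ⟨c, hc1, hc2⟩ := exists_between hcon
    have hct : c ≠ ⊤ := fun h => by rw [h] at hc2; exact (not_top_lt hc2).elim
    have hcb : c ≠ ⊥ := fun h => by rw [h] at hc1; exact (not_lt_bot hc1).elim
    have hcr : m < c.toReal := by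
      rw [← EReal.coe_lt_coe_iff, EReal.coe_toReal hct hcb]; exact hc1
    have hev := hlsc yl c hc2
    have hev2 := hyl.eventually hev
    have hev3 : ∀ᶠ n in atTop, Φ (ys n) ≤ ((m + 1/(n+1) : ℝ) : EReal) :=
      Eventually.of_forall hys
    have hev4 : ∀ᶠ n : ℕ in atTop, (1:ℝ)/(n+1) < c.toReal - m := by
      have := tendsto_one_div_add_atTop_nhds_zero_nat (𝕜 := ℝ)
      exact this.eventually (eventually_lt_nhds (by linarith))
    obtain ⟨n, h1, h2, h3⟩ := (hev2.and (hev3.and hev4)).exists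
    have : Φ (ys n) < Φ (ys n) := by
      calc Φ (ys n) ≤ ((m + 1/(n+1) : ℝ) : EReal) := h2
        _ < c := by
            rw [← EReal.coe_toReal hct hcb, EReal.coe_lt_coe_iff]
            linarith
        _ < Φ (ys n) := h1
    exact absurd this (lt_irrefl _)
  exact hΦyl.trans (hmle z)


set_option maxHeartbeats 1000000 in
private lemma resolvent_props (lam : ℝ) (f : H → EReal)
    (hf : ProperFn f) (hconv : LambdaConvex lam f) (hlsc : LowerSemicontinuous f)
    (τ : ℝ) (hτ : 0 < τ) (hadm : lam < 0 → τ < -1 / lam) (x : H) :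
    f (Jres f τ x) ≠ ⊤ ∧
    (∀ z : H, f z ≠ ⊤ → moreau f τ x ≤ (f z).toReal + ‖z - x‖ ^ 2 / (2 * τ)) ∧
    τ⁻¹ • (x - Jres f τ x) ∈ subdiff lam f (Jres f τ x) := by
  obtain ⟨⟨x0, hx0⟩, hbot⟩ := hf
  have hμ : 0 < lam + 1/τ := by
    rcases le_or_gt 0 lam with h | h
    · have : 0 < 1/τ := by positivity
      linarith
    · have h2 := hadm h
      have h4 : τ * (-lam) < 1 := by
        have h5 := mul_lt_mul_of_pos_right h2 (neg_pos.2 h)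
        have h6 : (-1/lam) * (-lam) = 1 := by field_simp [h.ne]
        linarith
      have h6 : -lam < 1/τ := by
        rw [lt_div_iff₀ hτ]
        linarith
      linarith
  set Φ : H → EReal := fun y => f y + ((‖y - x‖ ^ 2 / (2 * τ) : ℝ) : EReal) with hΦ
  have hΦnb : ∀ y, Φ y ≠ ⊥ := fun y => ereal_add_coe_ne_bot (hbot y) _
  have hΦx0 : Φ x0 ≠ ⊤ := ereal_add_coe_ne_top hx0 _
  have hqc : Continuous fun y : H => ‖y - x‖ ^ 2 / (2 * τ) :=
    ((continuous_id.sub continuous_const).norm.pow 2).div_const _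
  have hΦlsc : LowerSemicontinuous Φ := lsc_add_cont hbot hlsc hqc
  have hΦcvx : ∀ a b : H, ∀ t : ℝ, 0 ≤ t → t ≤ 1 → Φ a ≠ ⊤ → Φ b ≠ ⊤ →
      Φ ((1-t)•a + t•b)
        ≤ (((1-t)*(Φ a).toReal + t*(Φ b).toReal - (lam + 1/τ)/2*(t*(1-t))*‖a-b‖^2 : ℝ) : EReal) := by
    intro a b t ht0 ht1 hat hbt
    have hfa : f a ≠ ⊤ := ereal_ne_top_of_add _ _ hat
    have hfb : f b ≠ ⊤ := ereal_ne_top_of_add _ _ hbt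
    set A : ℝ := (f a).toReal with hA
    set B : ℝ := (f b).toReal with hB
    have hfa' : f a = (A : EReal) := (EReal.coe_toReal hfa (hbot a)).symm
    have hfb' : f b = (B : EReal) := (EReal.coe_toReal hfb (hbot b)).symm
    have hΦa : (Φ a).toReal = A + ‖a - x‖ ^ 2 / (2 * τ) := by
      rw [hΦ]
      simp only
      rw [hfa', ← EReal.coe_add, EReal.toReal_coe]
    have hΦb : (Φ b).toReal = B + ‖b - x‖ ^ 2 / (2 * τ) := by
      rw [hΦ]
      simp only
      rw [hfb', ← EReal.coe_add, EReal.toReal_coe]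
    have hkey := hconv a b t ht0 ht1
    rw [hfa', hfb', ← EReal.coe_mul, ← EReal.coe_mul, ← EReal.coe_add, ← EReal.coe_sub] at hkey
    have hstep : Φ ((1-t)•a + t•b)
        ≤ (((1-t)*A + t*B - lam/2*(t*(1-t))*‖a-b‖^2
            + ‖(1-t)•a + t•b - x‖^2/(2*τ) : ℝ) : EReal) := by
      rw [hΦ]
      simp only
      rw [EReal.coe_add]
      exact add_le_add_left hkey _
    refine hstep.trans (EReal.coe_le_coe_iff.2 ?_)
    rw [hΦa, hΦb, q_combo a b x t]
    apply le_of_eq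
    field_simp
    ring
  obtain ⟨ym, hym⟩ := exists_min hμ Φ hΦnb x0 hΦx0 hΦcvx hΦlsc
  have hex : ∃ y : H, ∀ z : H,
      f y + ((‖y - x‖ ^ 2 / (2 * τ) : ℝ) : EReal)
        ≤ f z + ((‖z - x‖ ^ 2 / (2 * τ) : ℝ) : EReal) := ⟨ym, hym⟩
  have hJeq : Jres f τ x = hex.choose := by
    rw [Jres, dif_pos hex]
  have hJmin : ∀ z : H, f (Jres f τ x) + ((‖Jres f τ x - x‖ ^ 2 / (2 * τ) : ℝ) : EReal)
      ≤ f z + ((‖z - x‖ ^ 2 / (2 * τ) : ℝ) : EReal) := by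
    have h0 := hex.choose_spec
    rw [← hJeq] at h0
    exact h0
  set J : H := Jres f τ x with hJdef
  have hX0 : f x0 = (((f x0).toReal : ℝ) : EReal) := (EReal.coe_toReal hx0 (hbot x0)).symm
  have hJnt : f J ≠ ⊤ := by
    intro h
    have h1 := hJmin x0
    rw [h, EReal.top_add_coe, hX0, ← EReal.coe_add, top_le_iff] at h1
    exact EReal.coe_ne_top _ h1
  set AJ : ℝ := (f J).toReal with hAJ
  have hJ' : f J = (AJ : EReal) := (EReal.coe_toReal hJnt (hbot J)).symm
  refine ⟨hJnt, ?_, ?_⟩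
  · intro z hz
    have h1 := hJmin z
    have hz' : f z = (((f z).toReal : ℝ) : EReal) := (EReal.coe_toReal hz (hbot z)).symm
    rw [hJ', hz', ← EReal.coe_add, ← EReal.coe_add, EReal.coe_le_coe_iff] at h1
    show (f J).toReal + ‖J - x‖ ^ 2 / (2 * τ) ≤ (f z).toReal + ‖z - x‖ ^ 2 / (2 * τ)
    rw [← hAJ]
    exact h1
  · refine ⟨hJnt, fun y => ?_⟩
    by_cases hy : f y = ⊤
    · rw [hy]; exact le_top
    · set By : ℝ := (f y).toReal with hBy
      have hy' : f y = (By : EReal) := (EReal.coe_toReal hy (hbot y)).symm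
      rw [hJ', hy', ← EReal.coe_add, EReal.coe_le_coe_iff]
      -- real goal
      have hip : ⟪τ⁻¹ • (x - J), y - J⟫ = -(τ⁻¹ * ⟪J - x, y - J⟫) := by
        rw [real_inner_smul_left, show x - J = -(J - x) from by abel, inner_neg_left]
        ring
      rw [hip]
      set s : ℝ := ‖y - J‖ with hs
      set ip : ℝ := ⟪J - x, y - J⟫ with hipd
      set qJ : ℝ := ‖J - x‖ ^ 2 with hqJ
      apply le_of_forall_small _ _ (lam/2*s^2 + s^2/(2*τ))
      intro t ht0 ht1
      have hkey := hconv J y t ht0.le ht1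
      rw [hJ', hy', ← EReal.coe_mul, ← EReal.coe_mul, ← EReal.coe_add, ← EReal.coe_sub] at hkey
      have hmin := hJmin ((1-t)•J + t•y)
      have hchain := hmin.trans (add_le_add_left hkey _)
      rw [hJ', ← EReal.coe_add, ← EReal.coe_add, EReal.coe_le_coe_iff] at hchain
      -- expand the quadratic term
      have hcombo : (1-t)•J + t•y - x = (J - x) + t•(y - J) := by module
      have hnorm : ‖(1-t)•J + t•y - x‖^2 = qJ + 2*(t*ip) + t^2*s^2 := by
        rw [hcombo, norm_add_smul_sq]
      have hsy : ‖J - y‖ = s := norm_sub_rev J y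
      rw [hnorm, hsy] at hchain
      -- hchain : AJ + qJ/(2τ) ≤ (1-t)*AJ + t*By - lam/2*(t*(1-t))*s^2 + (qJ + 2*(t*ip) + t^2*s^2)/(2τ)
      have hEq : t * ((AJ + (-(τ⁻¹ * ip) + lam/2*s^2)) - (By + t*(lam/2*s^2 + s^2/(2*τ))))
          = (AJ + qJ/(2*τ)) - ((1-t)*AJ + t*By - lam/2*(t*(1-t))*s^2
            + (qJ + 2*(t*ip) + t^2*s^2)/(2*τ)) := by
        field_simp
        ring
      have hprod : t * ((AJ + (-(τ⁻¹ * ip) + lam/2*s^2)) - (By + t*(lam/2*s^2 + s^2/(2*τ)))) ≤ t * 0 := by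
        rw [mul_zero, hEq]
        linarith
      have := (mul_le_mul_iff_of_pos_left ht0).1 hprod
      linarith


set_option maxHeartbeats 1000000 in
/-- differentiability of the Moreau–Yosida regularization. -/
theorem statement5 (lam : ℝ) (f : H → EReal)
    (hf : ProperFn f) (hconv : LambdaConvex lam f) (hlsc : LowerSemicontinuous f)
    (τ : ℝ) (hτ : 0 < τ) (hadm : lam < 0 → τ < -1 / lam) (x : H) :
    HasGradientAt (moreau f τ) (τ⁻¹ • (x - Jres f τ x)) x ∧
    τ⁻¹ • (x - Jres f τ x) ∈ subdiff lam f (Jres f τ x) := by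
  obtain ⟨hJx_nt, hMx, hsubx⟩ := resolvent_props lam f hf hconv hlsc τ hτ hadm x
  refine ⟨?_, hsubx⟩
  have hbot := hf.2
  have hκ : 0 < 1 + τ * lam := by
    rcases le_or_gt 0 lam with h | h
    · nlinarith
    · have h2 := hadm h
      have h5 := mul_lt_mul_of_pos_right h2 (neg_pos.2 h)
      have h6 : (-1/lam) * (-lam) = 1 := by field_simp [h.ne]
      nlinarith
  obtain ⟨C, hC⟩ : ∃ C : ℝ, C = 1/(2*τ) + τ⁻¹*(1 + 1/(1 + τ*lam)) := ⟨_, rfl⟩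
  have hCpos : 0 < C := by
    rw [hC]
    positivity
  set Jx : H := Jres f τ x with hJxd
  set p : H := τ⁻¹ • (x - Jx) with hp
  set AX : ℝ := (f Jx).toReal with hAX
  have hJx' : f Jx = (AX : EReal) := (EReal.coe_toReal hJx_nt (hbot Jx)).symm
  have hmx : moreau f τ x = AX + ‖Jx - x‖^2/(2*τ) := rfl
  have hbound : ∀ y : H,
      |moreau f τ y - moreau f τ x - ⟪p, y - x⟫| ≤ C * ‖y - x‖^2 := by
    intro y
    obtain ⟨hJy_nt, hMy, hsuby⟩ := resolvent_props lam f hf hconv hlsc τ hτ hadm y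
    set Jy : H := Jres f τ y with hJyd
    set py : H := τ⁻¹ • (y - Jy) with hpy
    set AY : ℝ := (f Jy).toReal with hAY
    have hJy' : f Jy = (AY : EReal) := (EReal.coe_toReal hJy_nt (hbot Jy)).symm
    have hmy : moreau f τ y = AY + ‖Jy - y‖^2/(2*τ) := rfl
    set d : H := Jy - Jx with hd
    set D : ℝ := ‖d‖^2 with hD
    have hDnn : 0 ≤ D := by rw [hD]; positivity
    -- subdifferential inequalities
    have hI1 : AX + (⟪p, d⟫ + lam/2*D) ≤ AY := by
      have h1 := hsubx.2 Jy
      rw [hJx', hJy', ← EReal.coe_add, EReal.coe_le_coe_iff] at h1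
      exact h1
    have hI2 : AY + (⟪py, -d⟫ + lam/2*D) ≤ AX := by
      have h1 := hsuby.2 Jx
      rw [hJy', hJx', ← EReal.coe_add, EReal.coe_le_coe_iff] at h1
      have hv : Jx - Jy = -d := by rw [hd]; abel
      rw [hv] at h1
      have hn : ‖(-d : H)‖^2 = D := by rw [norm_neg]
      rw [hn] at h1
      exact h1
    -- inner product algebra
    have hip1 : ⟪p, d⟫ = τ⁻¹ * (⟪x - y, d⟫ + ⟪y - Jy, d⟫ + D) := by
      rw [hp, real_inner_smul_left]
      congr 1
      have hv : x - Jx = (x - y) + ((y - Jy) + (Jy - Jx)) := by abel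
      rw [hv, inner_add_left, inner_add_left, hd, real_inner_self_eq_norm_sq, hD]
      ring
    have hip2 : ⟪py, -d⟫ = -(τ⁻¹ * ⟪y - Jy, d⟫) := by
      rw [hpy, real_inner_smul_left, inner_neg_right]
      ring
    have hS : τ⁻¹*⟪x - y, d⟫ + τ⁻¹*D + lam*D ≤ 0 := by
      rw [hip1] at hI1
      rw [hip2] at hI2
      linarith
    have hS2 : ⟪x - y, d⟫ + D + τ*lam*D ≤ 0 := by
      have h := mul_le_mul_of_nonneg_left hS hτ.le
      rw [mul_zero] at h
      have hEq : τ*(τ⁻¹*⟪x - y, d⟫ + τ⁻¹*D + lam*D) = ⟪x - y, d⟫ + D + τ*lam*D := by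
        field_simp
      linarith [hEq ▸ h]
    have hyx : ⟪y - x, d⟫ = -⟪x - y, d⟫ := by
      rw [show y - x = -(x - y) from by abel, inner_neg_left]
    have hlip : (1 + τ*lam)*D ≤ ⟪y - x, d⟫ := by
      rw [hyx]
      linarith
    have hdnorm : ‖d‖ ≤ ‖y - x‖/(1 + τ*lam) := by
      rcases eq_or_lt_of_le (norm_nonneg d) with h0 | h0
      · rw [← h0]
        positivity
      · have hin := real_inner_le_norm (y - x) d
        have h1 : (1 + τ*lam)*‖d‖*‖d‖ ≤ ‖y - x‖*‖d‖ := by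
          have : (1 + τ*lam)*‖d‖*‖d‖ = (1 + τ*lam)*D := by rw [hD]; ring
          rw [this]
          exact hlip.trans hin
        have h2 : (1 + τ*lam)*‖d‖ ≤ ‖y - x‖ := le_of_mul_le_mul_right h1 h0
        rw [le_div_iff₀ hκ]
        linarith
    -- upper bound
    have hup : moreau f τ y - moreau f τ x ≤ ⟪p, y - x⟫ + ‖y - x‖^2/(2*τ) := by
      have h1 := hMy Jx hJx_nt
      have hv : Jx - y = (Jx - x) + (-1 : ℝ)•(y - x) := by module
      have hn : ‖Jx - y‖^2 = ‖Jx - x‖^2 + 2*((-1)*⟪Jx - x, y - x⟫) + (-1)^2*‖y - x‖^2 := by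
        rw [hv, norm_add_smul_sq]
      have hipp : ⟪p, y - x⟫ = -(τ⁻¹*⟪Jx - x, y - x⟫) := by
        rw [hp, real_inner_smul_left, show x - Jx = -(Jx - x) from by abel, inner_neg_left]
        ring
      have hEq : ‖Jx - x‖^2/(2*τ) + (-(τ⁻¹*⟪Jx - x, y - x⟫) + ‖y - x‖^2/(2*τ))
          = (‖Jx - x‖^2 + 2*((-1)*⟪Jx - x, y - x⟫) + (-1)^2*‖y - x‖^2)/(2*τ) := by
        field_simp
        ring
      rw [hmy, hmx, hipp]
      rw [hn] at h1
      rw [← hAX] at h1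
      linarith
    -- lower bound
    have hlo : moreau f τ x - moreau f τ y ≤ ⟪py, x - y⟫ + ‖y - x‖^2/(2*τ) := by
      have h1 := hMx Jy hJy_nt
      have hv : Jy - x = (Jy - y) + (-1 : ℝ)•(x - y) := by module
      have hn : ‖Jy - x‖^2 = ‖Jy - y‖^2 + 2*((-1)*⟪Jy - y, x - y⟫) + (-1)^2*‖x - y‖^2 := by
        rw [hv, norm_add_smul_sq]
      have hipp : ⟪py, x - y⟫ = -(τ⁻¹*⟪Jy - y, x - y⟫) := by
        rw [hpy, real_inner_smul_left, show y - Jy = -(Jy - y) from by abel, inner_neg_left]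
        ring
      have hnn : ‖x - y‖ = ‖y - x‖ := norm_sub_rev x y
      have hEq : ‖Jy - y‖^2/(2*τ) + (-(τ⁻¹*⟪Jy - y, x - y⟫) + ‖x - y‖^2/(2*τ))
          = (‖Jy - y‖^2 + 2*((-1)*⟪Jy - y, x - y⟫) + (-1)^2*‖x - y‖^2)/(2*τ) := by
        field_simp
        ring
      rw [hmy, hmx, hipp]
      rw [hn] at h1
      rw [← hAY] at h1
      rw [← hnn]
      linarith
    -- difference of gradients
    have hpd : ‖py - p‖ ≤ τ⁻¹*(‖y - x‖ + ‖d‖) := by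
      have hv : py - p = τ⁻¹ • ((y - x) - d) := by
        rw [hpy, hp, hd]
        module
      rw [hv, norm_smul, Real.norm_eq_abs, abs_of_pos (inv_pos.2 hτ)]
      have := norm_sub_le (y - x) d
      have hτi : (0:ℝ) ≤ τ⁻¹ := (inv_pos.2 hτ).le
      exact mul_le_mul_of_nonneg_left this hτi
    have hpd2 : ‖py - p‖ ≤ τ⁻¹*(1 + 1/(1 + τ*lam))*‖y - x‖ := by
      refine hpd.trans ?_
      have h1 : ‖d‖ ≤ 1/(1 + τ*lam)*‖y - x‖ := by
        rw [div_mul_eq_mul_div, one_mul]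
        exact hdnorm
      have hτi : (0:ℝ) ≤ τ⁻¹ := (inv_pos.2 hτ).le
      have := mul_le_mul_of_nonneg_left (add_le_add (le_refl ‖y - x‖) h1) hτi
      calc τ⁻¹*(‖y - x‖ + ‖d‖) ≤ τ⁻¹*(‖y - x‖ + 1/(1 + τ*lam)*‖y - x‖) := this
        _ = τ⁻¹*(1 + 1/(1 + τ*lam))*‖y - x‖ := by ring
    have hinlow : -(‖py - p‖*‖y - x‖) ≤ ⟪py - p, y - x⟫ := by
      have h1 := real_inner_le_norm (p - py) (y - x)
      have h2 : ⟪p - py, y - x⟫ = -⟪py - p, y - x⟫ := by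
        rw [show p - py = -(py - p) from by abel, inner_neg_left]
      have h3 : ‖p - py‖ = ‖py - p‖ := norm_sub_rev p py
      rw [h2, h3] at h1
      linarith
    have hsplit : ⟪py, x - y⟫ = -⟪py - p, y - x⟫ - ⟪p, y - x⟫ := by
      rw [show x - y = -(y - x) from by abel, inner_neg_right, inner_sub_left]
      ring
    rw [abs_le]
    constructor
    · -- lower
      have h1 : ⟪py - p, y - x⟫ - ‖y - x‖^2/(2*τ) ≤ moreau f τ y - moreau f τ x - ⟪p, y - x⟫ := by
        rw [hsplit] at hlo
        linarith
      have h2 : -(τ⁻¹*(1 + 1/(1 + τ*lam))*‖y - x‖*‖y - x‖) ≤ ⟪py - p, y - x⟫ := by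
        have := mul_le_mul_of_nonneg_right hpd2 (norm_nonneg (y - x))
        linarith [hinlow]
      have h3 : τ⁻¹*(1 + 1/(1 + τ*lam))*‖y - x‖*‖y - x‖ + ‖y - x‖^2/(2*τ) = C*‖y - x‖^2 := by
        rw [hC]
        ring
      linarith
    · -- upper
      have h2 : ‖y - x‖^2/(2*τ) ≤ C*‖y - x‖^2 := by
        rw [hC]
        have h4 : (0:ℝ) ≤ τ⁻¹*(1 + 1/(1 + τ*lam)) := by positivity
        have h5 : (1/(2*τ) + τ⁻¹*(1 + 1/(1 + τ*lam)))*‖y - x‖^2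
            = ‖y - x‖^2/(2*τ) + τ⁻¹*(1 + 1/(1 + τ*lam))*‖y - x‖^2 := by ring
        rw [h5]
        linarith [mul_nonneg h4 (sq_nonneg ‖y - x‖)]
      linarith
  -- conclude
  rw [hasGradientAt_iff_isLittleO, Asymptotics.isLittleO_iff]
  intro c hc
  rw [Metric.eventually_nhds_iff]
  refine ⟨c/C, by positivity, fun y hy => ?_⟩
  rw [dist_eq_norm] at hy
  have hb := hbound y
  have hyn : ‖y - x‖ < c/C := hy
  rw [Real.norm_eq_abs]
  calc |moreau f τ y - moreau f τ x - ⟪p, y - x⟫| ≤ C*‖y - x‖^2 := hb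
    _ ≤ c*‖y - x‖ := by nlinarith [norm_nonneg (y - x), (le_div_iff₀ hCpos).1 hyn.le]
    _ = c*‖(fun x' => x' - x) y‖ := rfl


end
end

section
/- Let H be a real Hilbert space, λ ∈ ℝ, and let f : H → (-∞,∞] be proper, λ-convex and lower semicontinuous. Let τ > 0 be admissible, i.e. τ < −1/λ if λ < 0. Then the resolvent J_τ : H → H is Lipschitz with constant (1 + λτ)^{-1}, i.e. ‖J_τ(x) − J_τ(y)‖ ≤ (1 + λτ)^{-1} ‖x − y‖ for all x, y ∈ H. -/
open Filter Topology MeasureTheory Set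
open scoped ENNReal RealInnerProductSpace

noncomputable section

attribute [local instance] Classical.propDecidable

variable {H : Type*} [NormedAddCommGroup H] [InnerProductSpace ℝ H] [CompleteSpace H]

section AuxLemmas

theorem aux_conv_real {lam : ℝ} {f : H → EReal} (hconv : LambdaConvex lam f) {z w : H} {az aw t : ℝ}
    (hz : f z = (az : EReal)) (hw : f w = (aw : EReal)) (ht0 : 0 ≤ t) (ht1 : t ≤ 1) :
    f ((1-t)•z + t•w) ≤ (((1-t)*az + t*aw - lam/2*(t*(1-t))*‖z-w‖^2 : ℝ) : EReal) := by
  have h := hconv z w t ht0 ht1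
  rw [hz, hw] at h
  refine h.trans_eq ?_
  norm_cast

theorem aux_normCombo (z w c : H) (t : ℝ) :
    ‖((1-t)•z + t•w) - c‖^2 = (1-t)*‖z-c‖^2 + t*‖w-c‖^2 - t*(1-t)*‖z-w‖^2 := by
  have h1 : ((1-t)•z + t•w) - c = (1-t)•(z-c) + t•(w-c) := by module
  have h3 : ‖z-w‖^2 = ‖z-c‖^2 - 2*⟪z-c,w-c⟫ + ‖w-c‖^2 := by
    have h2 : z - w = (z-c) - (w-c) := by abel
    rw [h2, @norm_sub_sq_real]
  rw [h1, @norm_add_sq_real, h3, real_inner_smul_left, real_inner_smul_right,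
    norm_smul, norm_smul, mul_pow, mul_pow]
  simp only [Real.norm_eq_abs, sq_abs]
  ring

theorem aux_Fconv {lam τ : ℝ} (hτ : 0 < τ) {f : H → EReal} (hconv : LambdaConvex lam f)
    {z w c : H} {az aw t : ℝ}
    (hz : f z = (az : EReal)) (hw : f w = (aw : EReal)) (ht0 : 0 ≤ t) (ht1 : t ≤ 1) :
    f ((1-t)•z + t•w) + ((‖((1-t)•z + t•w) - c‖^2/(2*τ) : ℝ) : EReal)
      ≤ (((1-t)*(az + ‖z-c‖^2/(2*τ)) + t*(aw + ‖w-c‖^2/(2*τ))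
          - (lam+1/τ)/2*(t*(1-t))*‖z-w‖^2 : ℝ) : EReal) := by
  have h := aux_conv_real hconv hz hw ht0 ht1
  have h2 := add_le_add_left h ((‖((1-t)•z + t•w) - c‖^2/(2*τ) : ℝ) : EReal)
  refine h2.trans_eq ?_
  rw [← EReal.coe_add, EReal.coe_eq_coe_iff, aux_normCombo]
  field_simp
  ring

theorem aux_arith1 {a a' K b μ t d ε : ℝ} (hμ : 0 < μ) (hε : 0 < ε) (hdε : ε ≤ d)
    (ht : t = ε/(2*d))
    (hkey : a - 1 < (1-t)*a' + t*b - μ/2*(t*(1-t))*d^2)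
    (hKt : 1+|a|+|a'| = K*(t*d)) : -(K^2/μ) ≤ b := by
  have hd0 : 0 < d := lt_of_lt_of_le hε hdε
  have ht0 : 0 < t := by rw [ht]; positivity
  have hthalf : t ≤ 1/2 := by
    rw [ht, div_le_div_iff₀ (by positivity) (by norm_num)]; linarith
  have h5 : (1-t)*a' ≤ |a'| := by nlinarith [le_abs_self a', abs_nonneg a']
  have htB : t*b ≥ -(K*(t*d)) + μ/2*(t*(1-t))*d^2 := by
    have := neg_abs_le a
    nlinarith
  have hB : b ≥ -(K*d) + μ/2*((1-t))*d^2 := by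
    have h7 : t*(-(K*d) + μ/2*((1-t))*d^2) ≤ t*b := by
      refine le_trans (le_of_eq ?_) htB
      ring
    exact le_of_mul_le_mul_left h7 ht0
  have h8 : μ/2*((1-t))*d^2 ≥ μ/4*d^2 := by
    nlinarith [mul_nonneg (mul_nonneg hμ.le (by linarith : (0:ℝ) ≤ 1/2 - t)) (sq_nonneg d)]
  have h9 : -K^2 ≤ b*μ := by
    nlinarith [sq_nonneg (μ*d - 2*K), hμ]
  calc -(K^2/μ) = -K^2/μ := by ring
  _ ≤ b := by rwa [div_le_iff₀ hμ]

/-- lower bound -/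
theorem aux_lower_bound {lam τ : ℝ} (hτ : 0 < τ) (hμ : 0 < lam + 1/τ) {f : H → EReal}
    (hf : ProperFn f) (hconv : LambdaConvex lam f) (hlsc : LowerSemicontinuous f) (c : H) :
    ∃ M : ℝ, ∀ z : H, (M : EReal) ≤ f z + ((‖z - c‖ ^ 2 / (2 * τ) : ℝ) : EReal) := by
  obtain ⟨⟨x₀, hx₀⟩, hbot⟩ := hf
  set μ := lam + 1/τ with hμdef
  set a : ℝ := (f x₀).toReal with ha
  have hfx₀ : f x₀ = (a : EReal) := (EReal.coe_toReal hx₀ (hbot x₀)).symm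
  -- lsc ball
  have hlt : ((a - 1 : ℝ) : EReal) < f x₀ := by rw [hfx₀]; exact_mod_cast sub_one_lt a
  obtain ⟨ε, hε, hball⟩ := Metric.eventually_nhds_iff.1 (hlsc x₀ _ hlt)
  set a' : ℝ := a + ‖x₀ - c‖ ^ 2 / (2 * τ) with ha'
  set K : ℝ := 2*(1+|a|+|a'|)/ε with hK
  refine ⟨min (a-1) (-(K^2/μ)), fun z => ?_⟩
  by_cases hzt : f z = ⊤
  · rw [hzt, EReal.top_add_coe]; exact le_top
  set b₀ : ℝ := (f z).toReal with hb₀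
  have hfz : f z = (b₀ : EReal) := (EReal.coe_toReal hzt (hbot z)).symm
  set qz : ℝ := ‖z - c‖ ^ 2 / (2 * τ) with hqz
  have hqznn : 0 ≤ qz := by positivity
  rw [hfz, ← EReal.coe_add, EReal.coe_le_coe_iff]
  set d : ℝ := ‖z - x₀‖ with hd
  by_cases hdε : d < ε
  · -- in the ball
    have : ((a-1:ℝ):EReal) < f z := hball (show dist z x₀ < ε by rwa [dist_eq_norm])
    rw [hfz, EReal.coe_lt_coe_iff] at this
    have h1 : min (a-1) (-(K^2/μ)) ≤ a - 1 := min_le_left _ _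
    linarith
  · push_neg at hdε
    have hd0 : 0 < d := lt_of_lt_of_le hε hdε
    set t : ℝ := ε/(2*d) with ht
    have ht0 : 0 < t := by positivity
    have hthalf : t ≤ 1/2 := by
      rw [ht, div_le_div_iff₀ (by positivity) (by norm_num)]
      linarith
    have ht1 : t ≤ 1 := by linarith
    have hwball : dist ((1-t)•x₀ + t•z) x₀ < ε := by
      have he : ((1-t)•x₀ + t•z) - x₀ = t•(z - x₀) := by module
      have he2 : ε/(2*d)*d = ε/2 := by field_simp
      rw [dist_eq_norm, he, norm_smul, Real.norm_eq_abs, abs_of_pos ht0, ← hd, ht, he2]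
      linarith
    have hfw := hball hwball
    have hF := aux_Fconv (c := c) hτ hconv hfx₀ hfz ht0.le ht1
    have hmono : f ((1-t)•x₀+t•z) ≤ f ((1-t)•x₀+t•z)
        + ((‖((1-t)•x₀ + t•z) - c‖^2/(2*τ) : ℝ) : EReal) :=
      le_add_of_nonneg_right (by exact_mod_cast (by positivity : (0:ℝ) ≤ ‖((1-t)•x₀ + t•z) - c‖^2/(2*τ)))
    have hkey : ((a-1:ℝ) : EReal)
        < (((1-t)*(a + ‖x₀-c‖^2/(2*τ)) + t*(b₀ + ‖z-c‖^2/(2*τ))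
            - μ/2*(t*(1-t))*‖x₀ - z‖^2 : ℝ) : EReal) :=
      lt_of_lt_of_le hfw (hmono.trans hF)
    rw [EReal.coe_lt_coe_iff] at hkey
    have hxz : ‖x₀ - z‖ = d := by rw [hd, norm_sub_rev]
    rw [hxz, ← ha', ← hqz] at hkey
    have hKt : (1+|a|+|a'|) = K*(t*d) := by
      rw [hK, ht]; field_simp
    exact le_trans (min_le_right (a-1) (-(K^2/μ))) (aux_arith1 hμ hε hdε ht hkey hKt)

theorem aux_arith2 {μ mr A B D en ek eN : ℝ} (hμ : 0 < μ)
    (h1 : mr ≤ (1-(1/2:ℝ))*A + (1/2)*B - μ/2*((1/2)*(1-(1/2:ℝ)))*D^2)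
    (hA : A < mr + en) (hB : B < mr + ek) (hen : en ≤ eN) (hek : ek ≤ eN) :
    D^2 ≤ 8*eN/μ := by
  rw [le_div_iff₀ hμ]
  nlinarith

theorem aux_exists_min {lam τ : ℝ} (hτ : 0 < τ) (hμ : 0 < lam + 1/τ) {f : H → EReal}
    (hf : ProperFn f) (hconv : LambdaConvex lam f) (hlsc : LowerSemicontinuous f) (c : H) :
    ∃ y : H, ∀ z : H, f y + ((‖y - c‖ ^ 2 / (2 * τ) : ℝ) : EReal)
      ≤ f z + ((‖z - c‖ ^ 2 / (2 * τ) : ℝ) : EReal) := by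
  obtain ⟨M, hM⟩ := aux_lower_bound hτ hμ hf hconv hlsc c
  set F : H → EReal := fun z => f z + ((‖z - c‖ ^ 2 / (2 * τ) : ℝ) : EReal) with hF
  obtain ⟨⟨x₀, hx₀⟩, hbot⟩ := hf
  have hFx₀ : F x₀ ≠ ⊤ := by
    have h : f x₀ = ((f x₀).toReal : EReal) := (EReal.coe_toReal hx₀ (hbot x₀)).symm
    simp only [hF]
    rw [h, ← EReal.coe_add]
    exact EReal.coe_ne_top _
  set m : EReal := ⨅ z : H, F z with hm
  have hmle : ∀ z, m ≤ F z := fun z => iInf_le _ z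
  have hMm : (M : EReal) ≤ m := le_iInf hM
  have hmneb : m ≠ ⊥ := (lt_of_lt_of_le (EReal.bot_lt_coe M) hMm).ne'
  have hmnet : m ≠ ⊤ := (lt_of_le_of_lt (hmle x₀) (lt_top_iff_ne_top.2 hFx₀)).ne
  set mr : ℝ := m.toReal with hmrdef
  have hmr : (mr : EReal) = m := EReal.coe_toReal hmnet hmneb
  have hseq : ∀ n : ℕ, ∃ z, F z < ((mr + 1/((n:ℝ)+1) : ℝ) : EReal) := by
    intro n
    apply iInf_lt_iff.mp
    rw [← hm, ← hmr]
    have hpos : (0:ℝ) < 1/((n:ℝ)+1) := by positivity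
    exact_mod_cast (by linarith : mr < mr + 1/((n:ℝ)+1))
  choose zs hzs using hseq
  have hfzt : ∀ n, f (zs n) ≠ ⊤ := by
    intro n h
    have h2 := hzs n
    simp only [hF, h, EReal.top_add_coe] at h2
    exact not_top_lt h2
  have han : ∀ n, f (zs n) = (((f (zs n)).toReal : ℝ) : EReal) :=
    fun n => (EReal.coe_toReal (hfzt n) (hbot (zs n))).symm
  set an : ℕ → ℝ := fun n => (f (zs n)).toReal with handef
  have hrealb : ∀ n, an n + ‖zs n - c‖^2/(2*τ) < mr + 1/((n:ℝ)+1) := by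
    intro n
    have h2 := hzs n
    simp only [hF] at h2
    rw [han n, ← EReal.coe_add, EReal.coe_lt_coe_iff] at h2
    exact h2
  have key2 : ∀ N n k : ℕ, N ≤ n → N ≤ k →
      ‖zs n - zs k‖^2 ≤ 8*(1/((N:ℝ)+1))/(lam + 1/τ) := by
    intro N n k hn hk
    have hF2 := aux_Fconv (c := c) hτ hconv (han n) (han k) (t := 1/2) (by norm_num) (by norm_num)
    have hlow : m ≤ F ((1-(1/2:ℝ))•zs n + (1/2:ℝ)•zs k) := hmle _
    simp only [hF] at hlow
    have hreal : mr ≤ (1-(1/2:ℝ))*(an n + ‖zs n - c‖^2/(2*τ)) + (1/2)*(an k + ‖zs k - c‖^2/(2*τ))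
        - (lam+1/τ)/2*((1/2)*(1-(1/2:ℝ)))*‖zs n - zs k‖^2 := by
      rw [← EReal.coe_le_coe_iff]
      calc ((mr:ℝ) : EReal) = m := hmr
      _ ≤ _ := hlow
      _ ≤ _ := hF2
    have h1n : 1/((n:ℝ)+1) ≤ 1/((N:ℝ)+1) := by
      apply one_div_le_one_div_of_le (by positivity)
      exact_mod_cast by omega
    have h1k : 1/((k:ℝ)+1) ≤ 1/((N:ℝ)+1) := by
      apply one_div_le_one_div_of_le (by positivity)
      exact_mod_cast by omega
    exact aux_arith2 hμ hreal (hrealb n) (hrealb k) h1n h1k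
  have hcauchy : CauchySeq zs := by
    refine cauchySeq_of_le_tendsto_0 (fun N => Real.sqrt (8*(1/((N:ℝ)+1))/(lam + 1/τ))) ?_ ?_
    · intro n k N hn hk
      rw [dist_eq_norm]
      calc ‖zs n - zs k‖ = Real.sqrt (‖zs n - zs k‖^2) := (Real.sqrt_sq (norm_nonneg _)).symm
      _ ≤ _ := Real.sqrt_le_sqrt (key2 N n k hn hk)
    · have h0 : Tendsto (fun N : ℕ => 8*(1/((N:ℝ)+1))/(lam + 1/τ)) atTop (𝓝 0) := by
        have := (tendsto_one_div_add_atTop_nhds_zero_nat.const_mul 8).div_const (lam + 1/τ)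
        simpa using this
      have := (Real.continuous_sqrt.tendsto 0).comp h0
      simpa [Function.comp_def] using this
  obtain ⟨u, hu⟩ := cauchySeq_tendsto_of_complete hcauchy
  have hFum : F u ≤ m := by
    by_contra hcon
    push_neg at hcon
    have h1 : ((mr - ‖u-c‖^2/(2*τ) : ℝ) : EReal) < f u := by
      by_cases hfut : f u = ⊤
      · rw [hfut]; exact EReal.coe_lt_top _
      · have hr : f u = (((f u).toReal : ℝ) : EReal) := (EReal.coe_toReal hfut (hbot u)).symm
        rw [hr]
        rw [EReal.coe_lt_coe_iff]
        have h2 : m < F u := hcon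
        rw [← hmr] at h2
        simp only [hF] at h2
        rw [hr, ← EReal.coe_add, EReal.coe_lt_coe_iff] at h2
        linarith
    obtain ⟨cE, hc1, hc2⟩ := exists_between h1
    have hct : cE ≠ ⊤ := fun h => not_top_lt (h ▸ hc2)
    have hcb : cE ≠ ⊥ := (lt_trans (EReal.bot_lt_coe _) hc1).ne'
    set cr : ℝ := cE.toReal with hcrdef
    have hcr : (cr : EReal) = cE := EReal.coe_toReal hct hcb
    have hev1 : ∀ᶠ n in atTop, (cr : EReal) < f (zs n) := by
      have := hu.eventually (hlsc u cE hc2)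
      filter_upwards [this] with n hn
      rw [hcr]; exact hn
    have hq : Tendsto (fun n => ‖zs n - c‖^2/(2*τ)) atTop (𝓝 (‖u - c‖^2/(2*τ))) :=
      (((hu.sub tendsto_const_nhds).norm).pow 2).div_const _
    have hqq : Tendsto (fun n : ℕ => mr + 1/((n:ℝ)+1) - ‖zs n - c‖^2/(2*τ)) atTop
        (𝓝 (mr + 0 - ‖u-c‖^2/(2*τ))) :=
      (tendsto_const_nhds.add tendsto_one_div_add_atTop_nhds_zero_nat).sub hq
    have hlt2 : mr + 0 - ‖u-c‖^2/(2*τ) < cr := by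
      rw [← EReal.coe_lt_coe_iff, hcr]
      convert hc1 using 2
      ring
    have hev2 : ∀ᶠ n : ℕ in atTop, mr + 1/((n:ℝ)+1) - ‖zs n - c‖^2/(2*τ) < cr :=
      hqq.eventually_lt_const hlt2
    obtain ⟨n, hn1, hn2⟩ := (hev1.and hev2).exists
    rw [han n, EReal.coe_lt_coe_iff] at hn1
    have := hrealb n
    linarith
  exact ⟨u, fun z => le_trans hFum (hmle z)⟩

theorem aux_strong_ineq {lam τ : ℝ} (hτ : 0 < τ) {f : H → EReal} (hconv : LambdaConvex lam f)
    {c u z : H} {au b : ℝ}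
    (hu : ∀ w : H, f u + ((‖u - c‖ ^ 2 / (2 * τ) : ℝ) : EReal)
      ≤ f w + ((‖w - c‖ ^ 2 / (2 * τ) : ℝ) : EReal))
    (hfu : f u = (au : EReal)) (hz : f z = (b : EReal)) :
    au + ‖u-c‖^2/(2*τ) + (lam+1/τ)/2*‖u-z‖^2 ≤ b + ‖z-c‖^2/(2*τ) := by
  have hstep : ∀ t : ℝ, 0 < t → t ≤ 1 →
      au + ‖u-c‖^2/(2*τ) + (lam+1/τ)/2*(1-t)*‖u-z‖^2 ≤ b + ‖z-c‖^2/(2*τ) := by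
    intro t ht0 ht1
    have hFc := aux_Fconv (c := c) hτ hconv hfu hz ht0.le ht1
    have hlow := hu ((1-t)•u + t•z)
    have hchain : ((au + ‖u-c‖^2/(2*τ) : ℝ) : EReal)
        ≤ (((1-t)*(au + ‖u-c‖^2/(2*τ)) + t*(b + ‖z-c‖^2/(2*τ))
            - (lam+1/τ)/2*(t*(1-t))*‖u-z‖^2 : ℝ) : EReal) := by
      calc ((au + ‖u-c‖^2/(2*τ) : ℝ) : EReal)
          = f u + ((‖u - c‖ ^ 2 / (2 * τ) : ℝ) : EReal) := by rw [hfu, EReal.coe_add]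
      _ ≤ _ := hlow
      _ ≤ _ := hFc
    rw [EReal.coe_le_coe_iff] at hchain
    have h7 : t*(au + ‖u-c‖^2/(2*τ) + (lam+1/τ)/2*(1-t)*‖u-z‖^2)
        ≤ t*(b + ‖z-c‖^2/(2*τ)) := by nlinarith [hchain]
    exact le_of_mul_le_mul_left h7 ht0
  have htend : Tendsto (fun n : ℕ =>
      au + ‖u-c‖^2/(2*τ) + (lam+1/τ)/2*(1-1/((n:ℝ)+1))*‖u-z‖^2) atTop
      (𝓝 (au + ‖u-c‖^2/(2*τ) + (lam+1/τ)/2*(1-0)*‖u-z‖^2)) := by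
    apply Tendsto.add tendsto_const_nhds
    apply Tendsto.mul_const
    apply Tendsto.const_mul
    exact tendsto_const_nhds.sub tendsto_one_div_add_atTop_nhds_zero_nat
  have hle := le_of_tendsto htend (Filter.Eventually.of_forall (fun n => by
    refine hstep (1/((n:ℝ)+1)) (by positivity) ?_
    rw [div_le_one (by positivity)]
    linarith [Nat.cast_nonneg (α := ℝ) n]))
  have he : au + ‖u-c‖^2/(2*τ) + (lam+1/τ)/2*(1-0)*‖u-z‖^2
      = au + ‖u-c‖^2/(2*τ) + (lam+1/τ)/2*‖u-z‖^2 := by ring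
  rwa [he] at hle

end AuxLemmas

/-- the resolvent is `(1+λτ)⁻¹`-Lipschitz. -/
theorem statement6 (lam : ℝ) (f : H → EReal)
    (hf : ProperFn f) (hconv : LambdaConvex lam f) (hlsc : LowerSemicontinuous f)
    (τ : ℝ) (hτ : 0 < τ) (hadm : lam < 0 → τ < -1 / lam) (x y : H) :
    ‖Jres f τ x - Jres f τ y‖ ≤ (1 + lam * τ)⁻¹ * ‖x - y‖ := by
  have hμ : 0 < lam + 1/τ := by
    rcases lt_or_ge lam 0 with hl | hl
    · have h2 := hadm hl
      have h3 : -lam * τ < 1 := by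
        have h := (mul_lt_mul_iff_right₀ (neg_pos.2 hl)).2 h2
        have h4 : -lam * (-1/lam) = 1 := by
          have he : -lam * (-1/lam) = lam * (1/lam) := by ring
          rw [he, mul_one_div, div_self hl.ne]
        rwa [h4] at h
      have h6 : 0 < 1 + lam*τ := by linarith
      have h5 : lam + 1/τ = (1+lam*τ)/τ := by field_simp; ring
      rw [h5]; positivity
    · have h7 : 0 < 1/τ := by positivity
      linarith
  have hpos : 0 < 1 + lam*τ := by
    have e : τ*(lam+1/τ) = 1 + lam*τ := by
      rw [mul_add, mul_one_div, div_self hτ.ne']; ring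
    rw [← e]; positivity
  have hexx := aux_exists_min hτ hμ hf hconv hlsc x
  have hexy := aux_exists_min hτ hμ hf hconv hlsc y
  have hux : ∀ z : H, f (Jres f τ x) + ((‖Jres f τ x - x‖ ^ 2 / (2 * τ) : ℝ) : EReal)
      ≤ f z + ((‖z - x‖ ^ 2 / (2 * τ) : ℝ) : EReal) := by
    intro z
    simp only [Jres]
    rw [dif_pos hexx]
    exact hexx.choose_spec z
  have huy : ∀ z : H, f (Jres f τ y) + ((‖Jres f τ y - y‖ ^ 2 / (2 * τ) : ℝ) : EReal)
      ≤ f z + ((‖z - y‖ ^ 2 / (2 * τ) : ℝ) : EReal) := by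
    intro z
    simp only [Jres]
    rw [dif_pos hexy]
    exact hexy.choose_spec z
  set u := Jres f τ x with hud
  set v := Jres f τ y with hvd
  obtain ⟨⟨x₀, hx₀⟩, hbot⟩ := hf
  have hx₀r : f x₀ = (((f x₀).toReal : ℝ) : EReal) := (EReal.coe_toReal hx₀ (hbot x₀)).symm
  have hfut : f u ≠ ⊤ := by
    intro h
    have h2 := hux x₀
    rw [h, EReal.top_add_coe, top_le_iff] at h2
    rw [hx₀r, ← EReal.coe_add] at h2
    exact EReal.coe_ne_top _ h2
  have hfvt : f v ≠ ⊤ := by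
    intro h
    have h2 := huy x₀
    rw [h, EReal.top_add_coe, top_le_iff] at h2
    rw [hx₀r, ← EReal.coe_add] at h2
    exact EReal.coe_ne_top _ h2
  have hA : f u = (((f u).toReal : ℝ) : EReal) := (EReal.coe_toReal hfut (hbot u)).symm
  have hB : f v = (((f v).toReal : ℝ) : EReal) := (EReal.coe_toReal hfvt (hbot v)).symm
  set A : ℝ := (f u).toReal
  set B : ℝ := (f v).toReal
  have h1 := aux_strong_ineq hτ hconv hux hA hB
  have h2 := aux_strong_ineq hτ hconv huy hB hA
  have hnrev : ‖v-u‖ = ‖u-v‖ := norm_sub_rev _ _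
  rw [hnrev] at h2
  have hid : ‖v-x‖^2 - ‖u-x‖^2 + ‖u-y‖^2 - ‖v-y‖^2 = 2*⟪u-v, x-y⟫ := by
    have e1 : ∀ p q : H, ‖p - q‖^2 = ‖p‖^2 - 2*⟪p,q⟫ + ‖q‖^2 := fun p q => by
      rw [@norm_sub_sq_real]
    rw [e1 v x, e1 u x, e1 u y, e1 v y, inner_sub_left, inner_sub_right, inner_sub_right]
    ring
  have hid2 : (‖v-x‖^2 - ‖u-x‖^2 + ‖u-y‖^2 - ‖v-y‖^2)/(2*τ) = ⟪u-v,x-y⟫/τ := by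
    rw [hid]; ring
  have hmain : (lam + 1/τ)*‖u-v‖^2 ≤ ⟪u-v,x-y⟫/τ := by
    rw [← hid2]
    have e : (‖v-x‖^2 - ‖u-x‖^2 + ‖u-y‖^2 - ‖v-y‖^2)/(2*τ)
        = ‖v-x‖^2/(2*τ) - ‖u-x‖^2/(2*τ) + ‖u-y‖^2/(2*τ) - ‖v-y‖^2/(2*τ) := by ring
    rw [e]
    nlinarith [h1, h2]
  have hcs := real_inner_le_norm (u-v) (x-y)
  have h9 : (1+lam*τ)*‖u-v‖^2 ≤ ‖u-v‖*‖x-y‖ := by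
    have h10 : τ*((lam+1/τ)*‖u-v‖^2) ≤ τ*(⟪u-v,x-y⟫/τ) := mul_le_mul_of_nonneg_left hmain hτ.le
    have h11 : τ*(⟪u-v,x-y⟫/τ) = ⟪u-v,x-y⟫ := by field_simp
    have hsc : τ*(lam+1/τ) = 1+lam*τ := by
      rw [mul_add, mul_one_div, div_self hτ.ne']; ring
    have h12 : τ*((lam+1/τ)*‖u-v‖^2) = (1+lam*τ)*‖u-v‖^2 := by rw [← mul_assoc, hsc]
    rw [h11, h12] at h10
    exact h10.trans hcs
  rcases eq_or_lt_of_le (norm_nonneg (u-v)) with h0 | h0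
  · rw [← h0]
    positivity
  · rw [inv_mul_eq_div, le_div_iff₀ hpos]
    nlinarith [h9, h0]

end
end

section
/- Let H be a real Hilbert space, λ ∈ ℝ, and let f : H → (-∞,∞] be proper, λ-convex and lower semicontinuous. Let τ > 0 satisfy (1 + τλ)^{-1} ≤ 2 (in particular τ is admissible). Then the Moreau–Yosida regularization f_τ is of class C^{1,1} on H, with its gradient ∇f_τ Lipschitz of constant at most 3/τ: ‖∇f_τ(x) − ∇f_τ(y)‖ ≤ (3/τ)‖x − y‖ for all x, y ∈ H. -/
open Filter Topology MeasureTheory Set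
open scoped ENNReal RealInnerProductSpace

noncomputable section

attribute [local instance] Classical.propDecidable
set_option linter.unusedSectionVars false
set_option maxHeartbeats 1000000

variable {H : Type*} [NormedAddCommGroup H] [InnerProductSpace ℝ H] [CompleteSpace H]

lemma s7_combo_norm_sq (u v : H) (t : ℝ) :
    ‖(1-t) • u + t • v‖^2 = (1-t)*‖u‖^2 + t*‖v‖^2 - t*(1-t)*‖u-v‖^2 := by
  have h1 := norm_add_sq_real ((1-t) • u) (t • v)
  have h3 : ⟪(1-t) • u, t • v⟫ = (1-t) * (t * ⟪u, v⟫) := by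
    rw [real_inner_smul_left, real_inner_smul_right]
  have h4 : ‖(1-t) • u‖^2 = (1-t)^2 * ‖u‖^2 := by
    rw [norm_smul, Real.norm_eq_abs, mul_pow, sq_abs]
  have h5 : ‖t • v‖^2 = t^2 * ‖v‖^2 := by
    rw [norm_smul, Real.norm_eq_abs, mul_pow, sq_abs]
  rw [h1, h3, h4, h5, norm_sub_sq_real]; ring

lemma s7_inner_id1 (p q x y : H) :
    ‖q - x‖^2 + ‖p - y‖^2 - ‖p - x‖^2 - ‖q - y‖^2 = 2 * ⟪q - p, y - x⟫ := by
  simp only [norm_sub_sq_real, inner_sub_left, inner_sub_right]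
  ring

lemma s7_inner_id2 (p x y : H) :
    ‖p - y‖^2 - ‖p - x‖^2 = 2*⟪x - p, y - x⟫ + ‖y - x‖^2 := by
  simp only [norm_sub_sq_real, inner_sub_left, inner_sub_right,
    real_inner_self_eq_norm_sq]
  linear_combination (2:ℝ) * real_inner_comm x y

lemma s7_key_convex {lam : ℝ} {f : H → EReal} (hbot : ∀ w, f w ≠ ⊥)
    (hconv : LambdaConvex lam f) {τ : ℝ} (hτ : 0 < τ) (x : H) {a b : H}
    (ha : f a ≠ ⊤) (hb : f b ≠ ⊤) {t : ℝ} (ht0 : 0 ≤ t) (ht1 : t ≤ 1) :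
    f ((1-t) • a + t • b) ≠ ⊤ ∧
      (f ((1-t) • a + t • b)).toReal + ‖(1-t) • a + t • b - x‖^2/(2*τ)
        ≤ (1-t) * ((f a).toReal + ‖a-x‖^2/(2*τ)) + t * ((f b).toReal + ‖b-x‖^2/(2*τ))
          - (lam + 1/τ)/2 * (t*(1-t)) * ‖a-b‖^2 := by
  have hca : f a = ((f a).toReal : EReal) := (EReal.coe_toReal ha (hbot a)).symm
  have hcb : f b = ((f b).toReal : EReal) := (EReal.coe_toReal hb (hbot b)).symm
  have h := hconv a b t ht0 ht1
  rw [hca, hcb, ← EReal.coe_mul, ← EReal.coe_mul, ← EReal.coe_add, ← EReal.coe_sub] at h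
  have htop : f ((1-t) • a + t • b) ≠ ⊤ := ne_top_of_le_ne_top (EReal.coe_ne_top _) h
  refine ⟨htop, ?_⟩
  have hR : (f ((1-t) • a + t • b)).toReal
      ≤ (1-t) * (f a).toReal + t * (f b).toReal - lam/2*(t*(1-t))*‖a-b‖^2 := by
    have h2 := EReal.toReal_le_toReal h (hbot _) (EReal.coe_ne_top _)
    rwa [EReal.toReal_coe] at h2
  have hq : ‖(1-t) • a + t • b - x‖^2
      = (1-t)*‖a-x‖^2 + t*‖b-x‖^2 - t*(1-t)*‖a-b‖^2 := by
    have hv : (1-t) • a + t • b - x = (1-t) • (a-x) + t • (b-x) := by module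
    rw [hv, s7_combo_norm_sq, sub_sub_sub_cancel_right]
  rw [hq]
  have hτ0 : τ ≠ 0 := ne_of_gt hτ
  have heq : ((1-t)*‖a-x‖^2 + t*‖b-x‖^2 - t*(1-t)*‖a-b‖^2)/(2*τ)
      = (1-t)*(‖a-x‖^2/(2*τ)) + t*(‖b-x‖^2/(2*τ)) - (1/τ)/2*(t*(1-t))*‖a-b‖^2 := by
    field_simp
  rw [heq]
  linarith [hR]

lemma s7_exists_min {lam : ℝ} {f : H → EReal} (hf : ProperFn f)
    (hconv : LambdaConvex lam f) (hlsc : LowerSemicontinuous f)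
    {τ : ℝ} (hτ : 0 < τ) (hadm : 0 < 1 + τ * lam) (x : H) :
    ∃ y : H, f y ≠ ⊤ ∧ ∀ z : H,
      f y + ((‖y - x‖ ^ 2 / (2 * τ) : ℝ) : EReal)
        ≤ f z + ((‖z - x‖ ^ 2 / (2 * τ) : ℝ) : EReal) := by
  obtain ⟨⟨u₀, hu₀⟩, hbot⟩ := hf
  have hτ0 : τ ≠ 0 := ne_of_gt hτ
  set μ : ℝ := lam + 1/τ with hμdef
  have hμ : 0 < μ := by
    have h : μ = (1 + τ*lam)/τ := by rw [hμdef, eq_div_iff hτ0, add_mul, one_div_mul_cancel hτ0]; ring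
    rw [h]; positivity
  set u : H → ℝ := fun z => (f z).toReal + ‖z - x‖^2/(2*τ) with hu
  set c : ℝ := (f u₀).toReal with hc
  -- lower semicontinuity ball around u₀
  have hlt : ((c - 1 : ℝ) : EReal) < f u₀ := by
    conv_rhs => rw [← EReal.coe_toReal hu₀ (hbot u₀)]
    rw [EReal.coe_lt_coe_iff]
    exact sub_one_lt _
  obtain ⟨δ, hδ, hball⟩ := Metric.eventually_nhds_iff.1 (hlsc u₀ _ hlt)
  have hball' : ∀ z, f z ≠ ⊤ → ‖z - u₀‖ < δ → c - 1 ≤ u z := by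
    intro z hz hnorm
    have h1 : ((c-1:ℝ):EReal) < f z := hball (by rwa [dist_eq_norm])
    have h2 : c - 1 ≤ (f z).toReal := by
      have h3 := EReal.toReal_le_toReal h1.le (EReal.coe_ne_bot _) hz
      rwa [EReal.toReal_coe] at h3
    have h4 : 0 ≤ ‖z-x‖^2/(2*τ) := by positivity
    simp only [hu]; linarith
  -- global lower bound on u over the domain
  set cx : ℝ := u u₀ with hcx
  set K : ℝ := |c - 1 - cx| with hK
  have hK0 : 0 ≤ K := abs_nonneg _
  set L : ℝ := min (c - 1) (cx - (2*K/δ)^2/μ) with hL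
  have hlb : ∀ z, f z ≠ ⊤ → L ≤ u z := by
    intro z hz
    by_cases hd : ‖z - u₀‖ < δ
    · exact le_trans (min_le_left _ _) (hball' z hz hd)
    · push_neg at hd
      set d : ℝ := ‖z - u₀‖ with hdd
      have hd0 : 0 < d := lt_of_lt_of_le hδ hd
      set t : ℝ := δ/(2*d) with ht
      have ht0 : 0 < t := by positivity
      have ht2 : t ≤ 1/2 := by
        rw [ht, div_le_iff₀ (by positivity)]
        linarith
      have ht1 : t ≤ 1 := le_trans ht2 (by norm_num)
      obtain ⟨hwtop, hwle⟩ := s7_key_convex hbot hconv hτ x hu₀ hz ht0.le ht1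
      rw [norm_sub_rev u₀ z] at hwle
      have hwu : ‖(1-t) • u₀ + t • z - u₀‖ < δ := by
        have hveq : (1-t) • u₀ + t • z - u₀ = t • (z - u₀) := by module
        rw [hveq, norm_smul, Real.norm_eq_abs, abs_of_pos ht0]
        have htd2 : t * d = δ/2 := by rw [ht]; field_simp
        rw [← hdd, htd2]; linarith
      have h1 : c - 1 ≤ u ((1-t) • u₀ + t • z) := hball' _ hwtop hwu
      simp only [hu] at h1 hwle ⊢
      rw [← hdd] at hwle
      clear_value d t
      have htd : t * (2*d) = δ := by rw [ht]; field_simp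
      have e2 : (2*K/δ)*d*t = K := by
        field_simp
        linear_combination K * htd
      have e1 : t * ((f z).toReal + ‖z - x‖^2/(2*τ))
          ≥ (c-1) - (1-t)*cx + μ/2*(t*(1-t))*d^2 := by
        have hcx2 : cx = (f u₀).toReal + ‖u₀ - x‖^2/(2*τ) := by rw [hcx]
        nlinarith [h1, hwle]
      have h4 : 0 ≤ μ*t*d^2*(1/4 - t/2) := by
        have : (0:ℝ) ≤ 1/4 - t/2 := by linarith
        positivity
      have hKl : -K ≤ c - 1 - cx := neg_abs_le _
      have hLle : L ≤ cx - (2*K/δ)^2/μ := min_le_right _ _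
      clear_value μ c cx K L
      have hmain : cx - (2*K/δ)*d + μ/4*d^2 ≤ (f z).toReal + ‖z - x‖^2/(2*τ) := by
        rw [← mul_le_mul_iff_right₀ ht0]
        linarith [e1, e2, hKl, h4]
      have hquad : cx - (2*K/δ)^2/μ ≤ cx - (2*K/δ)*d + μ/4*d^2 := by
        have e : ((2*K/δ)^2/μ)*μ = (2*K/δ)^2 := div_mul_cancel₀ _ (ne_of_gt hμ)
        nlinarith [sq_nonneg (μ*d - 2*(2*K/δ)), hμ, e]
      calc L ≤ cx - (2*K/δ)^2/μ := hLle
        _ ≤ cx - (2*K/δ)*d + μ/4*d^2 := hquad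
        _ ≤ _ := hmain
  -- infimum over the domain
  set S : Set ℝ := u '' {z | f z ≠ ⊤} with hS
  have hSne : S.Nonempty := ⟨u u₀, u₀, hu₀, rfl⟩
  have hSbdd : BddBelow S := ⟨L, by rintro s ⟨z, hz, rfl⟩; exact hlb z hz⟩
  set m : ℝ := sInf S with hm
  have hmle : ∀ z, f z ≠ ⊤ → m ≤ u z := fun z hz => csInf_le hSbdd ⟨z, hz, rfl⟩
  -- minimizing sequence
  have hseq : ∀ n : ℕ, ∃ z, f z ≠ ⊤ ∧ u z < m + 1/(n+1) := by
    intro n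
    have hpos : m < m + 1/(n+1) := lt_add_of_pos_right _ (by positivity)
    obtain ⟨s, hsS, hs⟩ := exists_lt_of_csInf_lt hSne hpos
    obtain ⟨z, hz, rfl⟩ := hsS
    exact ⟨z, hz, hs⟩
  choose v hv1 hv2 using hseq
  -- Cauchy estimate via midpoint strong convexity
  have hdist : ∀ n k : ℕ, μ/8 * ‖v n - v k‖^2 ≤ 1/2*(1/(n+1)) + 1/2*(1/(k+1)) := by
    intro n k
    obtain ⟨hwt, hwle⟩ := s7_key_convex hbot hconv hτ x (hv1 n) (hv1 k)
      (t := 1/2) (by norm_num) (by norm_num)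
    have h1 : m ≤ u ((1-(1/2 : ℝ)) • v n + (1/2 : ℝ) • v k) := hmle _ hwt
    have h2 := hv2 n
    have h3 := hv2 k
    simp only [hu] at h1 hwle h2 h3
    rw [← hμdef] at hwle
    nlinarith [h1, hwle, h2, h3]
  have hcauchy : CauchySeq v := by
    apply cauchySeq_of_le_tendsto_0 (b := fun N : ℕ => Real.sqrt (8/μ * (1/(N+1))))
    · intro n k N hn hk
      have h1 := hdist n k
      have h2 : (1:ℝ)/(n+1) ≤ 1/(N+1) := by
        apply one_div_le_one_div_of_le (by positivity)
        have : (N:ℝ) ≤ n := Nat.cast_le.2 hn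
        linarith
      have h3 : (1:ℝ)/(k+1) ≤ 1/(N+1) := by
        apply one_div_le_one_div_of_le (by positivity)
        have : (N:ℝ) ≤ k := Nat.cast_le.2 hk
        linarith
      have h4 : ‖v n - v k‖^2 ≤ 8/μ * (1/(N+1)) := by
        rw [← mul_le_mul_iff_right₀ (show (0:ℝ) < μ/8 by positivity)]
        calc μ/8 * ‖v n - v k‖^2 ≤ 1/2*(1/(n+1)) + 1/2*(1/(k+1)) := h1
          _ ≤ 1/(N+1) := by linarith
          _ = μ/8 * (8/μ * (1/(N+1))) := by field_simp
      rw [dist_eq_norm]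
      calc ‖v n - v k‖ = Real.sqrt (‖v n - v k‖^2) := by
            rw [Real.sqrt_sq (norm_nonneg _)]
        _ ≤ Real.sqrt (8/μ * (1/(N+1))) := Real.sqrt_le_sqrt h4
    · have h0 : Tendsto (fun N : ℕ => 8/μ * (1/(N+1) : ℝ)) atTop (𝓝 0) := by
        have := tendsto_one_div_add_atTop_nhds_zero_nat.const_mul (8/μ)
        simpa using this
      have := (Real.continuous_sqrt.tendsto 0).comp h0
      simpa [Function.comp_def] using this
  obtain ⟨y, hy⟩ := cauchySeq_tendsto_of_complete hcauchy
  -- u (v n) → m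
  have humono : Tendsto (fun n => u (v n)) atTop (𝓝 m) := by
    have hup : Tendsto (fun n : ℕ => m + 1/(n+1)) atTop (𝓝 m) := by
      have := tendsto_const_nhds (x := m) (f := atTop (α := ℕ))
      simpa using this.add tendsto_one_div_add_atTop_nhds_zero_nat
    exact tendsto_of_tendsto_of_tendsto_of_le_of_le tendsto_const_nhds hup
      (fun n => hmle _ (hv1 n)) (fun n => (hv2 n).le)
  have hqconv : Tendsto (fun n => ‖v n - x‖^2/(2*τ)) atTop
      (𝓝 (‖y - x‖^2/(2*τ))) :=
    (((hy.sub_const x).norm).pow 2).div_const (2*τ)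
  have hFt : Tendsto (fun n => (f (v n)).toReal) atTop
      (𝓝 (m - ‖y - x‖^2/(2*τ))) := by
    have h := humono.sub hqconv
    have heq : (fun n => (f (v n)).toReal)
        = fun n => u (v n) - ‖v n - x‖^2/(2*τ) := by
      funext n; simp only [hu]; ring
    rw [heq]; exact h
  -- f y ≤ m - q(y)
  have hfy : f y ≤ ((m - ‖y - x‖^2/(2*τ) : ℝ) : EReal) := by
    by_contra hcon
    push_neg at hcon
    obtain ⟨c', hc1, hc2⟩ := exists_between hcon
    have hc'top : c' ≠ ⊤ := hc2.ne_top
    have hc'bot : c' ≠ ⊥ := hc1.ne_bot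
    have hcr : ((c'.toReal : ℝ) : EReal) = c' := EReal.coe_toReal hc'top hc'bot
    have hev : ∀ᶠ n in atTop, c' < f (v n) := hy.eventually (hlsc y c' hc2)
    have hrle : ∀ᶠ n in atTop, c'.toReal ≤ (f (v n)).toReal := by
      filter_upwards [hev] with n hn
      rw [← hcr] at hn
      have h5 := EReal.toReal_le_toReal hn.le (EReal.coe_ne_bot _) (hv1 n)
      rwa [EReal.toReal_coe] at h5
    have h6 : c'.toReal ≤ m - ‖y - x‖^2/(2*τ) := ge_of_tendsto hFt hrle
    have h7 : ((m - ‖y - x‖^2/(2*τ) : ℝ) : EReal) < ((c'.toReal : ℝ) : EReal) := by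
      rw [hcr]; exact hc1
    rw [EReal.coe_lt_coe_iff] at h7
    linarith
  have hytop : f y ≠ ⊤ := ne_top_of_le_ne_top (EReal.coe_ne_top _) hfy
  have hyto : (f y).toReal ≤ m - ‖y - x‖^2/(2*τ) := by
    have h5 := EReal.toReal_le_toReal hfy (hbot y) (EReal.coe_ne_top _)
    rwa [EReal.toReal_coe] at h5
  refine ⟨y, hytop, fun z => ?_⟩
  by_cases hz : f z = ⊤
  · rw [hz, EReal.top_add_coe]
    exact le_top
  · rw [← EReal.coe_toReal hytop (hbot y), ← EReal.coe_toReal hz (hbot z),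
      ← EReal.coe_add, ← EReal.coe_add, EReal.coe_le_coe_iff]
    have h8 := hmle z hz
    simp only [hu] at h8
    linarith [hyto]

lemma s7_Jres_spec {lam : ℝ} {f : H → EReal} (hf : ProperFn f)
    (hconv : LambdaConvex lam f) (hlsc : LowerSemicontinuous f)
    {τ : ℝ} (hτ : 0 < τ) (hadm : 0 < 1 + τ * lam) (x : H) :
    f (Jres f τ x) ≠ ⊤ ∧
    ∀ z, f z ≠ ⊤ → moreau f τ x ≤ (f z).toReal + ‖z - x‖^2/(2*τ) := by
  have hbot := hf.2
  obtain ⟨y, hy1, hy2⟩ := s7_exists_min hf hconv hlsc hτ hadm x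
  have hex : ∃ y : H, ∀ z : H,
      f y + ((‖y - x‖ ^ 2 / (2 * τ) : ℝ) : EReal)
        ≤ f z + ((‖z - x‖ ^ 2 / (2 * τ) : ℝ) : EReal) := ⟨y, hy2⟩
  have hJ : Jres f τ x = hex.choose := by rw [Jres, dif_pos hex]
  have hspec : ∀ z : H,
      f (Jres f τ x) + ((‖Jres f τ x - x‖ ^ 2 / (2 * τ) : ℝ) : EReal)
        ≤ f z + ((‖z - x‖ ^ 2 / (2 * τ) : ℝ) : EReal) := by
    rw [hJ]; exact hex.choose_spec
  have hJtop : f (Jres f τ x) ≠ ⊤ := by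
    intro htop
    have h := hspec y
    rw [htop, EReal.top_add_coe, top_le_iff] at h
    rw [← EReal.coe_toReal hy1 (hbot y), ← EReal.coe_add] at h
    exact EReal.coe_ne_top _ h
  refine ⟨hJtop, fun z hz => ?_⟩
  have h := hspec z
  rw [← EReal.coe_toReal hJtop (hbot _), ← EReal.coe_toReal hz (hbot z),
    ← EReal.coe_add, ← EReal.coe_add, EReal.coe_le_coe_iff] at h
  exact h

lemma s7_Jres_growth {lam : ℝ} {f : H → EReal} (hf : ProperFn f)
    (hconv : LambdaConvex lam f) (hlsc : LowerSemicontinuous f)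
    {τ : ℝ} (hτ : 0 < τ) (hadm : 0 < 1 + τ * lam) (x : H) {z : H} (hz : f z ≠ ⊤) :
    2*τ*(f (Jres f τ x)).toReal + ‖Jres f τ x - x‖^2 + (1 + τ*lam) * ‖z - Jres f τ x‖^2
      ≤ 2*τ*(f z).toReal + ‖z - x‖^2 := by
  have hbot := hf.2
  have hτ0 : τ ≠ 0 := ne_of_gt hτ
  obtain ⟨hJtop, hmin⟩ := s7_Jres_spec hf hconv hlsc hτ hadm x
  set p := Jres f τ x with hp
  have hμ : 0 < lam + 1/τ := by
    have h : lam + 1/τ = (1 + τ*lam)/τ := by field_simp; ring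
    rw [h]; positivity
  have hstep : ∀ t : ℝ, 0 < t → t ≤ 1 →
      (lam+1/τ)/2 * (1-t) * ‖p - z‖^2
        ≤ ((f z).toReal + ‖z - x‖^2/(2*τ)) - ((f p).toReal + ‖p - x‖^2/(2*τ)) := by
    intro t ht0 ht1
    obtain ⟨hwt, hwle⟩ := s7_key_convex hbot hconv hτ x hJtop hz ht0.le ht1
    have h1 : (f p).toReal + ‖p - x‖^2/(2*τ)
        ≤ (f ((1-t)•p + t•z)).toReal + ‖(1-t)•p+t•z - x‖^2/(2*τ) := by
      have := hmin _ hwt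
      simpa only [moreau, hp] using this
    have h2 : t * ((lam+1/τ)/2 * (1-t) * ‖p-z‖^2)
        ≤ t * (((f z).toReal + ‖z - x‖^2/(2*τ)) - ((f p).toReal + ‖p - x‖^2/(2*τ))) := by
      nlinarith [h1, hwle]
    exact le_of_mul_le_mul_left h2 ht0
  have hfinal : (lam+1/τ)/2 * ‖p - z‖^2
      ≤ ((f z).toReal + ‖z - x‖^2/(2*τ)) - ((f p).toReal + ‖p - x‖^2/(2*τ)) := by
    by_contra hcon
    push_neg at hcon
    set A : ℝ := (lam+1/τ)/2 * ‖p - z‖^2 with hA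
    set D : ℝ := ((f z).toReal + ‖z - x‖^2/(2*τ)) - ((f p).toReal + ‖p - x‖^2/(2*τ)) with hD
    have hD0 : 0 ≤ D := by
      have h := hstep 1 one_pos le_rfl
      simpa using h
    have hA0 : 0 < A := lt_of_le_of_lt hD0 hcon
    have ht0 : 0 < (A - D)/(2*A) := by
      apply div_pos (by linarith) (by linarith)
    have ht1 : (A - D)/(2*A) ≤ 1 := by
      rw [div_le_one (by linarith)]; linarith
    have h := hstep _ ht0 ht1
    have hAs : A * (1 - (A - D)/(2*A)) ≤ D := by
      calc A * (1 - (A - D)/(2*A)) = (lam+1/τ)/2 * (1-(A - D)/(2*A)) * ‖p - z‖^2 := by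
            rw [hA]; ring
        _ ≤ D := h
    have ht : (A - D)/(2*A) * (2*A) = A - D := div_mul_cancel₀ _ (by linarith)
    nlinarith [hAs, ht, hA0]
  -- clear denominators
  have e1 : 2*τ*(‖p - x‖^2/(2*τ)) = ‖p - x‖^2 := by field_simp
  have e2 : 2*τ*(‖z - x‖^2/(2*τ)) = ‖z - x‖^2 := by field_simp
  have e3 : 2*τ*((lam+1/τ)/2*‖p - z‖^2) = (1+τ*lam)*‖p - z‖^2 := by
    field_simp; ring
  have e4 : ‖z - p‖^2 = ‖p - z‖^2 := by rw [norm_sub_rev]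
  have h := mul_le_mul_of_nonneg_left hfinal (by positivity : (0:ℝ) ≤ 2*τ)
  rw [e4]
  nlinarith [h, e1, e2, e3]

lemma s7_Jres_lip {lam : ℝ} {f : H → EReal} (hf : ProperFn f)
    (hconv : LambdaConvex lam f) (hlsc : LowerSemicontinuous f)
    {τ : ℝ} (hτ : 0 < τ) (hadm : 0 < 1 + τ * lam) (hb : (1 + τ * lam)⁻¹ ≤ 2)
    (x y : H) : ‖Jres f τ x - Jres f τ y‖ ≤ 2 * ‖x - y‖ := by
  have hptop := (s7_Jres_spec hf hconv hlsc hτ hadm x).1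
  have hqtop := (s7_Jres_spec hf hconv hlsc hτ hadm y).1
  have h1 := s7_Jres_growth hf hconv hlsc hτ hadm x (z := Jres f τ y) hqtop
  have h2 := s7_Jres_growth hf hconv hlsc hτ hadm y (z := Jres f τ x) hptop
  set p := Jres f τ x with hp
  set q := Jres f τ y with hq
  have hid := s7_inner_id1 p q x y
  have hcs : ⟪q - p, y - x⟫ ≤ ‖q - p‖ * ‖y - x‖ := real_inner_le_norm _ _
  have hn1 : ‖q - p‖ = ‖p - q‖ := norm_sub_rev _ _
  have hn2 : ‖y - x‖ = ‖x - y‖ := norm_sub_rev _ _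
  have hn3 : ‖q - p‖^2 = ‖p - q‖^2 := by rw [hn1]
  have hcs2 : ⟪q - p, y - x⟫ ≤ ‖p - q‖ * ‖x - y‖ := by
    rw [← hn1, ← hn2]; exact hcs
  rw [hn3] at h1
  have key : (1 + τ*lam) * ‖p - q‖^2 ≤ ‖p - q‖ * ‖x - y‖ := by
    linarith [h1, h2, hid, hcs2]
  rcases le_or_gt ‖p - q‖ 0 with hpq | hpq
  · have := norm_nonneg (x - y)
    linarith
  · have h3 : (1 + τ*lam) * ‖p - q‖ ≤ ‖x - y‖ := by
      nlinarith [key, hpq]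
    have h4 : ‖p - q‖ ≤ ‖x - y‖ * (1 + τ*lam)⁻¹ := by
      rw [← div_eq_mul_inv, le_div_iff₀ hadm]
      linarith
    have h5 : ‖x - y‖ * (1 + τ*lam)⁻¹ ≤ ‖x - y‖ * 2 :=
      mul_le_mul_of_nonneg_left hb (norm_nonneg _)
    linarith

lemma s7_env_key {lam : ℝ} {f : H → EReal} (hf : ProperFn f)
    (hconv : LambdaConvex lam f) (hlsc : LowerSemicontinuous f)
    {τ : ℝ} (hτ : 0 < τ) (hadm : 0 < 1 + τ * lam) (x y : H) :
    moreau f τ y - moreau f τ x - ⟪τ⁻¹ • (x - Jres f τ x), y - x⟫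
      ≤ ‖y - x‖^2/(2*τ) := by
  have hτ0 : τ ≠ 0 := ne_of_gt hτ
  have hptop := (s7_Jres_spec hf hconv hlsc hτ hadm x).1
  set p := Jres f τ x with hp
  have hm : moreau f τ y ≤ (f p).toReal + ‖p - y‖^2/(2*τ) :=
    (s7_Jres_spec hf hconv hlsc hτ hadm y).2 p hptop
  have hmx : moreau f τ x = (f p).toReal + ‖p - x‖^2/(2*τ) := by
    simp only [moreau, hp]
  have hin : ⟪τ⁻¹ • (x - p), y - x⟫ = τ⁻¹ * ⟪x - p, y - x⟫ :=
    real_inner_smul_left _ _ _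
  have hid := s7_inner_id2 p x y
  have h2 : ‖p - y‖^2 - ‖p - x‖^2 - ‖y - x‖^2 = 2*⟪x - p, y - x⟫ := by
    linarith [hid]
  have e : ‖p - y‖^2/(2*τ) - ‖p - x‖^2/(2*τ) - τ⁻¹ * ⟪x - p, y - x⟫
      - ‖y - x‖^2/(2*τ) = 0 := by
    calc ‖p - y‖^2/(2*τ) - ‖p - x‖^2/(2*τ) - τ⁻¹ * ⟪x - p, y - x⟫ - ‖y - x‖^2/(2*τ)
        = (‖p - y‖^2 - ‖p - x‖^2 - ‖y - x‖^2)/(2*τ) - τ⁻¹ * ⟪x - p, y - x⟫ := by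
          ring
      _ = (2*⟪x - p, y - x⟫)/(2*τ) - τ⁻¹ * ⟪x - p, y - x⟫ := by rw [h2]
      _ = 0 := by field_simp; ring
  rw [hin, hmx]
  linarith [hm, e]

/-- the Moreau–Yosida regularization is `C^{1,1}` with `Lip(∇f_τ) ≤ 3/τ`. -/
theorem statement7 (lam : ℝ) (f : H → EReal)
    (hf : ProperFn f) (hconv : LambdaConvex lam f) (hlsc : LowerSemicontinuous f)
    (τ : ℝ) (hτ : 0 < τ) (hadm : 0 < 1 + τ * lam) (hb : (1 + τ * lam)⁻¹ ≤ 2) :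
    (∀ x : H, DifferentiableAt ℝ (moreau f τ) x) ∧
    ∀ x y : H, ‖gradient (moreau f τ) x - gradient (moreau f τ) y‖ ≤ 3 / τ * ‖x - y‖ := by
  set v : H → H := fun w => τ⁻¹ • (w - Jres f τ w) with hv
  have hvlip : ∀ x y : H, ‖v x - v y‖ ≤ 3/τ * ‖x - y‖ := by
    intro x y
    have hJ := s7_Jres_lip hf hconv hlsc hτ hadm hb x y
    have hveq : v x - v y = τ⁻¹ • ((x - y) - (Jres f τ x - Jres f τ y)) := by
      simp only [hv]
      rw [← smul_sub]
      congr 1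
      abel
    rw [hveq, norm_smul, Real.norm_eq_abs, abs_of_pos (inv_pos.2 hτ)]
    have h1 : ‖(x - y) - (Jres f τ x - Jres f τ y)‖
        ≤ ‖x - y‖ + ‖Jres f τ x - Jres f τ y‖ := norm_sub_le _ _
    have h2 : τ⁻¹ * ‖(x - y) - (Jres f τ x - Jres f τ y)‖ ≤ τ⁻¹ * (3*‖x - y‖) :=
      mul_le_mul_of_nonneg_left (by linarith) (by positivity)
    calc τ⁻¹ * ‖(x - y) - (Jres f τ x - Jres f τ y)‖ ≤ τ⁻¹ * (3*‖x - y‖) := h2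
      _ = 3/τ * ‖x - y‖ := by rw [div_eq_mul_inv]; ring
  have hgrad : ∀ x : H, HasGradientAt (moreau f τ) (v x) x := by
    intro x
    have hbound : ∀ y : H, |moreau f τ y - moreau f τ x - ⟪v x, y - x⟫|
        ≤ 7/(2*τ) * ‖y - x‖^2 := by
      intro y
      have h1 := s7_env_key hf hconv hlsc hτ hadm x y
      have h2 := s7_env_key hf hconv hlsc hτ hadm y x
      have hvx : ⟪v x, y - x⟫ = ⟪τ⁻¹ • (x - Jres f τ x), y - x⟫ := by rw [hv]
      have hvy : ⟪τ⁻¹ • (y - Jres f τ y), x - y⟫ = ⟪v y, x - y⟫ := by rw [hv]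
      rw [hvy] at h2
      have hip : ⟪v y, x - y⟫ = -⟪v y, y - x⟫ := by
        rw [show x - y = -(y - x) by abel, inner_neg_right]
      have hvd : ⟪v y, y - x⟫ - ⟪v x, y - x⟫ = ⟪v y - v x, y - x⟫ :=
        (inner_sub_left _ _ _).symm
      have hcs : |⟪v y - v x, y - x⟫| ≤ ‖v y - v x‖ * ‖y - x‖ :=
        abs_real_inner_le_norm _ _
      have hlip := hvlip y x
      have hxy2 : ‖x - y‖^2 = ‖y - x‖^2 := by rw [norm_sub_rev]
      have h3 : ‖v y - v x‖ * ‖y - x‖ ≤ (3/τ * ‖y - x‖) * ‖y - x‖ :=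
        mul_le_mul_of_nonneg_right (hvlip y x) (norm_nonneg _)
      have habs := abs_le.1 hcs
      have hpos : (0:ℝ) ≤ 3 * τ⁻¹ * ‖y - x‖^2 := by positivity
      have e1 : ‖y - x‖^2/(2*τ) = 1/2 * τ⁻¹ * ‖y - x‖^2 := by ring
      have e2 : 3/τ * ‖y - x‖ * ‖y - x‖ = 3 * τ⁻¹ * ‖y - x‖^2 := by ring
      have e3 : 7/(2*τ) * ‖y - x‖^2 = 7/2 * τ⁻¹ * ‖y - x‖^2 := by ring
      clear_value v
      rw [hxy2] at h2
      rw [abs_le]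
      constructor
      · linarith [h2, hip, hvd, habs.1, h3, e1, e2, e3]
      · linarith [h1, hvx, hpos, e1, e3]
    rw [hasGradientAt_iff_isLittleO]
    have hO : (fun y => moreau f τ y - moreau f τ x - ⟪v x, y - x⟫)
        =O[𝓝 x] fun y => ‖y - x‖^2 := by
      apply Asymptotics.isBigO_of_le' (c := 7/(2*τ))
      intro y
      rw [Real.norm_eq_abs, Real.norm_eq_abs, abs_of_nonneg (by positivity : (0:ℝ) ≤ ‖y - x‖^2)]
      exact hbound y
    have ho2 : (fun y : H => ‖y - x‖^2) =o[𝓝 x] fun y => y - x := by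
      rw [Asymptotics.isLittleO_iff]
      intro c hc
      filter_upwards [Metric.ball_mem_nhds x hc] with y hy
      rw [Real.norm_eq_abs, abs_of_nonneg (by positivity : (0:ℝ) ≤ ‖y - x‖^2)]
      have hyx : ‖y - x‖ < c := by rwa [Metric.mem_ball, dist_eq_norm] at hy
      calc ‖y - x‖^2 = ‖y - x‖ * ‖y - x‖ := sq (‖y - x‖) ▸ by ring
        _ ≤ c * ‖y - x‖ := mul_le_mul_of_nonneg_right hyx.le (norm_nonneg _)
    exact hO.trans_isLittleO ho2
  constructor
  · exact fun x => (hgrad x).differentiableAt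
  · intro x y
    rw [(hgrad x).gradient, (hgrad y).gradient]
    exact hvlip x y


end
end

section
/- Let H be a real Hilbert space, λ ∈ ℝ, and let f : H → (-∞,∞] be proper, λ-convex and lower semicontinuous. Let τ > 0 be admissible, i.e. τ < −1/λ if λ < 0. Then for every x ∈ H: |∇f|(J_τ(x)) ≤ ‖x − J_τ(x)‖/τ ≤ (1 + λτ)^{-1} |∇f|(x), where the right-hand side is interpreted as +∞ if |∇f|(x) = ∞. -/
open Filter Topology MeasureTheory Set
open scoped ENNReal RealInnerProductSpace

set_option maxHeartbeats 1000000

noncomputable section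

attribute [local instance] Classical.propDecidable

variable {H : Type*} [NormedAddCommGroup H] [InnerProductSpace ℝ H] [CompleteSpace H]

lemma norm_combo_sq (u v : H) (t : ℝ) :
    ‖(1 - t) • u + t • v‖ ^ 2
      = (1 - t) * ‖u‖ ^ 2 + t * ‖v‖ ^ 2 - t * (1 - t) * ‖u - v‖ ^ 2 := by
  simp only [← real_inner_self_eq_norm_sq]
  simp only [inner_add_left, inner_add_right, inner_sub_left, inner_sub_right,
    real_inner_smul_left, real_inner_smul_right]
  rw [real_inner_comm v u]
  ring

lemma lamConv_real {lam : ℝ} {f : H → EReal} (hconv : LambdaConvex lam f)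
    (hbot : ∀ z, f z ≠ ⊥) {a b : H} (ha : f a ≠ ⊤) (hb : f b ≠ ⊤) {t : ℝ}
    (ht0 : 0 ≤ t) (ht1 : t ≤ 1) :
    f ((1 - t) • a + t • b) ≠ ⊤ ∧
      (f ((1 - t) • a + t • b)).toReal ≤
        (1 - t) * (f a).toReal + t * (f b).toReal
          - lam / 2 * (t * (1 - t)) * ‖a - b‖ ^ 2 := by
  have h := hconv a b t ht0 ht1
  rw [← EReal.coe_toReal ha (hbot a), ← EReal.coe_toReal hb (hbot b)] at h
  rw [← EReal.coe_mul, ← EReal.coe_mul, ← EReal.coe_add, ← EReal.coe_sub] at h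
  refine ⟨ne_top_of_le_ne_top (EReal.coe_ne_top _) h, ?_⟩
  have h2 := EReal.toReal_le_toReal h (hbot _) (EReal.coe_ne_top _)
  rw [EReal.toReal_coe] at h2
  exact h2

lemma exists_resolvent_min {lam : ℝ} {f : H → EReal}
    (hf : ProperFn f) (hconv : LambdaConvex lam f) (hlsc : LowerSemicontinuous f)
    {τ : ℝ} (hτ : 0 < τ) (hμ : 0 < lam + 1 / τ) (x : H) :
    ∃ y : H, ∀ z : H,
      f y + ((‖y - x‖ ^ 2 / (2 * τ) : ℝ) : EReal)
        ≤ f z + ((‖z - x‖ ^ 2 / (2 * τ) : ℝ) : EReal) := by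
  classical
  obtain ⟨x₀, hx₀⟩ := hf.1
  have hbot := hf.2
  set μ := lam + 1 / τ with hμdef
  set g : H → EReal := fun z => f z + ((‖z - x‖ ^ 2 / (2 * τ) : ℝ) : EReal) with hgdef
  have hτ' : τ ≠ 0 := ne_of_gt hτ
  have hgbot : ∀ z, g z ≠ ⊥ := fun z => by
    simp [hgdef, EReal.add_eq_bot_iff, hbot z]
  have hgtop : ∀ z, (g z = ⊤ ↔ f z = ⊤) := by
    intro z
    constructor
    · intro h
      by_contra hz
      rw [hgdef] at h
      simp only at h
      rw [← EReal.coe_toReal hz (hbot z), ← EReal.coe_add] at h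
      exact EReal.coe_ne_top _ h
    · intro h
      simp [hgdef, h, EReal.top_add_coe]
  have hgreal : ∀ z, f z ≠ ⊤ → (g z).toReal = (f z).toReal + ‖z - x‖ ^ 2 / (2 * τ) := by
    intro z hz
    rw [hgdef]
    simp only
    rw [EReal.toReal_add hz (hbot z) (EReal.coe_ne_top _) (EReal.coe_ne_bot _), EReal.toReal_coe]
  -- strong convexity, real form
  have hstrong : ∀ a b : H, f a ≠ ⊤ → f b ≠ ⊤ → ∀ t : ℝ, 0 ≤ t → t ≤ 1 →
      f ((1 - t) • a + t • b) ≠ ⊤ ∧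
      (g ((1 - t) • a + t • b)).toReal ≤
        (1 - t) * (g a).toReal + t * (g b).toReal - μ / 2 * (t * (1 - t)) * ‖a - b‖ ^ 2 := by
    intro a b ha hb t ht0 ht1
    obtain ⟨hftop, hfle⟩ := lamConv_real hconv hbot ha hb ht0 ht1
    have h1 : (1 - t) • a + t • b - x = (1 - t) • (a - x) + t • (b - x) := by
      module
    have h2 : a - b = (a - x) - (b - x) := by abel
    have hq : ‖(1 - t) • a + t • b - x‖ ^ 2
        = (1 - t) * ‖a - x‖ ^ 2 + t * ‖b - x‖ ^ 2 - t * (1 - t) * ‖a - b‖ ^ 2 := by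
      rw [h1, norm_combo_sq, h2]
    refine ⟨hftop, ?_⟩
    rw [hgreal _ hftop, hgreal _ ha, hgreal _ hb, hq, hμdef]
    have e : (1 - t) * ((f a).toReal + ‖a - x‖ ^ 2 / (2 * τ)) +
        t * ((f b).toReal + ‖b - x‖ ^ 2 / (2 * τ)) -
          (lam + 1 / τ) / 2 * (t * (1 - t)) * ‖a - b‖ ^ 2
        = ((1 - t) * (f a).toReal + t * (f b).toReal
            - lam / 2 * (t * (1 - t)) * ‖a - b‖ ^ 2)
          + ((1 - t) * ‖a - x‖ ^ 2 + t * ‖b - x‖ ^ 2 - t * (1 - t) * ‖a - b‖ ^ 2) / (2 * τ) := by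
      field_simp
      ring
    rw [e]
    linarith [hfle]
  -- lower semicontinuity of g
  have hglsc : LowerSemicontinuous g := by
    intro z
    have h2 : Continuous fun w : H => ((‖w - x‖ ^ 2 / (2 * τ) : ℝ) : EReal) :=
      continuous_coe_real_ereal.comp (by continuity)
    exact LowerSemicontinuousAt.add' (hlsc z) (h2.lowerSemicontinuous z)
      (EReal.continuousAt_add (Or.inr (EReal.coe_ne_bot _)) (Or.inr (EReal.coe_ne_top _)))
  -- epigraph
  set epi : Set (H × ℝ) := {p | g p.1 ≤ (p.2 : EReal)} with hepidef
  have hepi_closed : IsClosed epi := by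
    rw [← isOpen_compl_iff, isOpen_iff_mem_nhds]
    rintro ⟨z, r⟩ hzr
    simp only [mem_compl_iff, hepidef, mem_setOf_eq, not_le] at hzr
    obtain ⟨s, hs1, hs2⟩ := EReal.lt_iff_exists_real_btwn.1 hzr
    have h1 : {w : H | (s : EReal) < g w} ∈ 𝓝 z := hglsc z s hs2
    have h2 : Iio s ∈ 𝓝 r := Iio_mem_nhds (EReal.coe_lt_coe_iff.1 hs1)
    rw [nhds_prod_eq]
    refine mem_of_superset (prod_mem_prod h1 h2) ?_
    rintro ⟨w, u⟩ ⟨hw, hu⟩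
    simp only [mem_compl_iff, hepidef, mem_setOf_eq, not_le]
    exact lt_trans (EReal.coe_lt_coe_iff.2 hu) hw
  have hepi_conv : Convex ℝ epi := by
    rintro ⟨z₁, r₁⟩ h₁ ⟨z₂, r₂⟩ h₂ a b ha hb hab
    simp only [hepidef, mem_setOf_eq] at h₁ h₂
    have hg₁ : g z₁ ≠ ⊤ := (lt_of_le_of_lt h₁ (EReal.coe_lt_top r₁)).ne
    have hg₂ : g z₂ ≠ ⊤ := (lt_of_le_of_lt h₂ (EReal.coe_lt_top r₂)).ne
    have hf₁ : f z₁ ≠ ⊤ := fun h => hg₁ ((hgtop z₁).2 h)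
    have hf₂ : f z₂ ≠ ⊤ := fun h => hg₂ ((hgtop z₂).2 h)
    have ha' : a = 1 - b := by linarith
    subst ha'
    have hs := hstrong z₁ z₂ hf₁ hf₂ b hb (by linarith)
    have ht₁ : (g z₁).toReal ≤ r₁ := by
      have := EReal.toReal_le_toReal h₁ (hgbot z₁) (EReal.coe_ne_top r₁)
      rwa [EReal.toReal_coe] at this
    have ht₂ : (g z₂).toReal ≤ r₂ := by
      have := EReal.toReal_le_toReal h₂ (hgbot z₂) (EReal.coe_ne_top r₂)
      rwa [EReal.toReal_coe] at this
    show g ((1 - b) • z₁ + b • z₂, (1 - b) * r₁ + b * r₂).1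
        ≤ (((1 - b) • z₁ + b • z₂, (1 - b) * r₁ + b * r₂).2 : EReal)
    simp only
    have hgc : g ((1 - b) • z₁ + b • z₂) ≠ ⊤ := fun h => hs.1 ((hgtop _).1 h)
    rw [← EReal.coe_toReal hgc (hgbot _)]
    rw [EReal.coe_le_coe_iff]
    have hμq : 0 ≤ μ / 2 * (b * (1 - b)) * ‖z₁ - z₂‖ ^ 2 := by
      have : 0 ≤ b * (1 - b) := mul_nonneg hb (by linarith)
      positivity
    nlinarith [hs.2, mul_le_mul_of_nonneg_left ht₁ (show (0:ℝ) ≤ 1 - b by linarith),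
      mul_le_mul_of_nonneg_left ht₂ hb]
  -- separating functional
  have hgx₀top : g x₀ ≠ ⊤ := fun h => hx₀ ((hgtop x₀).1 h)
  set c := (g x₀).toReal with hcdef
  have hgc : g x₀ = (c : EReal) := (EReal.coe_toReal hgx₀top (hgbot x₀)).symm
  have hpt : ((x₀, c - 1) : H × ℝ) ∉ epi := by
    simp only [hepidef, mem_setOf_eq, not_le, hgc]
    exact_mod_cast EReal.coe_lt_coe_iff.2 (by linarith)
  obtain ⟨φ, u, hu1, hu2⟩ := geometric_hahn_banach_point_closed hepi_conv hepi_closed hpt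
  set β := φ ((0 : H), (1 : ℝ)) with hβdef
  have hβ : 0 < β := by
    have hmem : ((x₀, c) : H × ℝ) ∈ epi := by
      simp only [hepidef, mem_setOf_eq, hgc]; exact le_refl _
    have h2 := hu2 _ hmem
    have hsplit : φ ((x₀, c) : H × ℝ) = φ ((x₀, c - 1) : H × ℝ) + β := by
      rw [hβdef, ← map_add]
      norm_num
    rw [hsplit] at h2
    linarith
  have hdecomp : ∀ (z : H) (t : ℝ), φ ((z, t) : H × ℝ) = φ ((z, 0) : H × ℝ) + t * β := by
    intro z t
    have h0 : ((z, t) : H × ℝ) = ((z, 0) : H × ℝ) + t • (((0 : H), (1 : ℝ)) : H × ℝ) := by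
      simp [Prod.ext_iff]
    rw [h0, map_add, φ.map_smul, smul_eq_mul, hβdef]
  have hminor : ∀ z : H, g z ≠ ⊤ → u < φ ((z, 0) : H × ℝ) + β * (g z).toReal := by
    intro z hz
    have hmem : ((z, (g z).toReal) : H × ℝ) ∈ epi := by
      simp only [hepidef, mem_setOf_eq]
      rw [EReal.coe_toReal hz (hgbot z)]
    have h2 := hu2 _ hmem
    rw [hdecomp] at h2
    linarith
  set N := ‖φ‖ with hNdef
  have hN : 0 ≤ N := by rw [hNdef]; positivity
  have hφb : ∀ z : H, φ ((z, 0) : H × ℝ) ≤ N * ‖z‖ := by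
    intro z
    have h := φ.le_opNorm ((z, 0) : H × ℝ)
    have hn : ‖((z, 0) : H × ℝ)‖ = ‖z‖ := by
      rw [Prod.norm_def]
      simp [max_eq_left (norm_nonneg z)]
    rw [hn, Real.norm_eq_abs] at h
    exact (le_abs_self _).trans h
  -- uniform lower bound
  have hμβ : 0 < β ^ 2 * μ := by positivity
  set B₀ : ℝ := (2 * (u - N * ‖x₀‖) * (μ * β) - c * (β ^ 2 * μ) - 4 * N ^ 2) / (β ^ 2 * μ)
    with hB₀def
  have hB₀ : ∀ z : H, (B₀ : EReal) ≤ g z := by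
    intro z
    by_cases hz : g z = ⊤
    · rw [hz]; exact le_top
    have hfz : f z ≠ ⊤ := fun h => hz ((hgtop z).2 h)
    set G := (g z).toReal with hGdef
    set d := ‖z - x₀‖ with hddef
    have hd : 0 ≤ d := norm_nonneg _
    have hs := hstrong x₀ z hx₀ hfz (1/2) (by norm_num) (by norm_num)
    have hsgtop : g ((1 - (1:ℝ)/2) • x₀ + ((1:ℝ)/2) • z) ≠ ⊤ := fun h => hs.1 ((hgtop _).1 h)
    have hm := hminor _ hsgtop
    have hφm := hφb ((1 - (1:ℝ)/2) • x₀ + ((1:ℝ)/2) • z)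
    have hnm : ‖(1 - (1:ℝ)/2) • x₀ + ((1:ℝ)/2) • z‖ ≤ ‖x₀‖ + d := by
      have : (1 - (1:ℝ)/2) • x₀ + ((1:ℝ)/2) • z = x₀ + ((1:ℝ)/2) • (z - x₀) := by module
      rw [this]
      refine (norm_add_le _ _).trans ?_
      rw [norm_smul, Real.norm_eq_abs]
      rw [← hddef]
      have : |(1:ℝ)/2| * d ≤ d := by rw [abs_of_pos (by norm_num : (0:ℝ) < 1/2)]; linarith
      linarith
    have hub : u ≤ N * ‖x₀‖ + N * d + β * ((1 - 1/2) * c + (1/2) * G - μ / 2 * (1/2 * (1 - 1/2)) * d ^ 2) := by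
      have h1 : φ (((1 - (1:ℝ)/2) • x₀ + ((1:ℝ)/2) • z, 0) : H × ℝ) ≤ N * (‖x₀‖ + d) :=
        hφm.trans (mul_le_mul_of_nonneg_left hnm hN)
      have h2 : β * (g ((1 - (1:ℝ)/2) • x₀ + ((1:ℝ)/2) • z)).toReal
          ≤ β * ((1 - 1/2) * c + (1/2) * G - μ / 2 * (1/2 * (1 - 1/2)) * ‖x₀ - z‖ ^ 2) := by
        apply mul_le_mul_of_nonneg_left _ hβ.le
        rw [hcdef, hGdef]
        exact hs.2
      have hd2 : ‖x₀ - z‖ = d := by rw [hddef, norm_sub_rev]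
      rw [hd2] at h2
      nlinarith [hminor _ hsgtop]
    -- conclude B₀ ≤ G
    have hgoal : B₀ ≤ G := by
      rw [hB₀def, div_le_iff₀ hμβ]
      have h7 : 0 ≤ (μ * β) * ((N * ‖x₀‖ + N * d + β * ((1 - 1/2) * c + (1/2) * G
          - μ / 2 * (1/2 * (1 - 1/2)) * d ^ 2)) - u) :=
        mul_nonneg (by positivity) (by linarith [hub])
      clear_value B₀ μ β N c G d
      nlinarith [h7, sq_nonneg (μ * β * d / 2 - 2 * N)]
    rw [← EReal.coe_toReal hz (hgbot z), ← hGdef]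
    exact EReal.coe_le_coe_iff.2 hgoal
  -- infimum
  set m := ⨅ z : H, g z with hmdef
  have hmle : ∀ z, m ≤ g z := fun z => iInf_le _ z
  have hmub : (B₀ : EReal) ≤ m := le_iInf hB₀
  have hmtop : m ≠ ⊤ := fun h => hgx₀top (top_le_iff.1 (h ▸ hmle x₀))
  have hmbot : m ≠ ⊥ := fun h => (by simp [h] at hmub : (B₀:EReal) ≤ (⊥:EReal)) |>.not_gt
    (EReal.bot_lt_coe B₀) |>.elim
  set m₀ := m.toReal with hm₀def
  have hm : m = (m₀ : EReal) := (EReal.coe_toReal hmtop hmbot).symm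
  -- minimizing sequence
  have hseq : ∀ n : ℕ, ∃ z, g z < m + ((1 / (n + 1) : ℝ) : EReal) := by
    intro n
    have hlt : m < m + ((1 / (n + 1) : ℝ) : EReal) := by
      rw [hm, ← EReal.coe_add, EReal.coe_lt_coe_iff]
      have : (0:ℝ) < 1 / (n + 1) := by positivity
      linarith
    rw [hmdef] at hlt
    exact iInf_lt_iff.1 hlt
  choose y hy using hseq
  have hy' : ∀ n : ℕ, g (y n) < ((m₀ + 1 / (n + 1) : ℝ) : EReal) := by
    intro n
    have h := hy n
    rwa [hm, ← EReal.coe_add] at h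
  have hyfin : ∀ n, g (y n) ≠ ⊤ := fun n => ((hy' n).trans (EReal.coe_lt_top _)).ne
  have hyfbot : ∀ n, f (y n) ≠ ⊤ := fun n h => hyfin n ((hgtop _).2 h)
  set r : ℕ → ℝ := fun n => (g (y n)).toReal with hrdef
  have hrm : ∀ n, m₀ ≤ r n := by
    intro n
    have h := hmle (y n)
    rw [hm, ← EReal.coe_toReal (hyfin n) (hgbot _)] at h
    exact EReal.coe_le_coe_iff.1 h
  have hrub : ∀ n, r n < m₀ + 1 / (n + 1) := by
    intro n
    have h := hy' n
    rw [← EReal.coe_toReal (hyfin n) (hgbot _)] at h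
    exact EReal.coe_lt_coe_iff.1 h
  -- the sequence is Cauchy
  have hcb : ∀ n k : ℕ, μ * ‖y n - y k‖ ^ 2 ≤ 8 * ((r n - m₀) + (r k - m₀)) := by
    intro n k
    have hs := hstrong (y n) (y k) (hyfbot n) (hyfbot k) (1/2) (by norm_num) (by norm_num)
    have hmidtop : g ((1 - (1:ℝ)/2) • y n + ((1:ℝ)/2) • y k) ≠ ⊤ :=
      fun h => hs.1 ((hgtop _).1 h)
    have hmid : m₀ ≤ (g ((1 - (1:ℝ)/2) • y n + ((1:ℝ)/2) • y k)).toReal := by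
      have h := hmle ((1 - (1:ℝ)/2) • y n + ((1:ℝ)/2) • y k)
      rw [hm, ← EReal.coe_toReal hmidtop (hgbot _)] at h
      exact EReal.coe_le_coe_iff.1 h
    have h2 := hs.2
    have e1 : r n = (g (y n)).toReal := rfl
    have e2 : r k = (g (y k)).toReal := rfl
    have hr1 := hrm n
    have hr2 := hrm k
    clear_value r m₀ μ
    linarith [h2, hmid, e1, e2, hr1, hr2]
  have hcauchy : CauchySeq y := by
    rw [Metric.cauchySeq_iff']
    intro ε hε
    obtain ⟨N, hN⟩ := exists_nat_one_div_lt (show (0:ℝ) < μ * ε ^ 2 / 32 by positivity)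
    refine ⟨N, fun n hn => ?_⟩
    rw [dist_eq_norm]
    by_contra hcon
    push_neg at hcon
    have h1 := hcb n N
    have h2 : 1 / ((n:ℝ) + 1) ≤ 1 / ((N:ℝ) + 1) := by
      apply one_div_le_one_div_of_le (by positivity)
      exact_mod_cast Nat.succ_le_succ hn
    have h3 : ε ^ 2 ≤ ‖y n - y N‖ ^ 2 := by nlinarith [hcon, hε]
    have h4 : μ * ε ^ 2 ≤ μ * ‖y n - y N‖ ^ 2 := mul_le_mul_of_nonneg_left h3 hμ.le
    have h5 : r n - m₀ < 1 / ((N:ℝ) + 1) := by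
      have := hrub n; have := h2; linarith
    have h6 : r N - m₀ < 1 / ((N:ℝ) + 1) := by
      have := hrub N; linarith
    have h7 : (0:ℝ) < μ * ε ^ 2 := by positivity
    clear_value r m₀ μ
    linarith [hN, h7, h1, h4, h5, h6]
  obtain ⟨w, hlim⟩ := cauchySeq_tendsto_of_complete hcauchy
  have hgw : g w ≤ m := by
    by_contra hcon
    push_neg at hcon
    obtain ⟨s, hs1, hs2⟩ := EReal.lt_iff_exists_real_btwn.1 hcon
    have hev : ∀ᶠ n in atTop, (s : EReal) < g (y n) :=
      hlim.eventually (hglsc w s hs2)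
    have hms : m₀ < s := by
      rw [hm] at hs1
      exact EReal.coe_lt_coe_iff.1 hs1
    obtain ⟨N₁, hN₁⟩ := exists_nat_one_div_lt (show (0:ℝ) < s - m₀ by linarith)
    obtain ⟨n, hn1, hn2⟩ := (hev.and (eventually_ge_atTop N₁)).exists
    have h2 : 1 / ((n:ℝ) + 1) ≤ 1 / ((N₁:ℝ) + 1) := by
      apply one_div_le_one_div_of_le (by positivity)
      exact_mod_cast Nat.succ_le_succ hn2
    have h3 : g (y n) < (s : EReal) := by
      refine (hy' n).trans_le (EReal.coe_le_coe_iff.2 ?_)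
      linarith
    exact absurd hn1 (not_lt.2 h3.le)
  refine ⟨w, fun z => ?_⟩
  have := hgw.trans (hmle z)
  simpa only [hgdef] using this

lemma Jres_min {lam : ℝ} {f : H → EReal}
    (hf : ProperFn f) (hconv : LambdaConvex lam f) (hlsc : LowerSemicontinuous f)
    {τ : ℝ} (hτ : 0 < τ) (hμ : 0 < lam + 1 / τ) (x : H) :
    ∀ z : H, f (Jres f τ x) + ((‖Jres f τ x - x‖ ^ 2 / (2 * τ) : ℝ) : EReal)
        ≤ f z + ((‖z - x‖ ^ 2 / (2 * τ) : ℝ) : EReal) := by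
  have hex := exists_resolvent_min hf hconv hlsc hτ hμ x
  rw [Jres, dif_pos hex]
  exact hex.choose_spec

lemma Jres_ne_top {lam : ℝ} {f : H → EReal}
    (hf : ProperFn f) (hconv : LambdaConvex lam f) (hlsc : LowerSemicontinuous f)
    {τ : ℝ} (hτ : 0 < τ) (hμ : 0 < lam + 1 / τ) (x : H) :
    f (Jres f τ x) ≠ ⊤ := by
  obtain ⟨x₀, hx₀⟩ := hf.1
  intro h
  have hm := Jres_min hf hconv hlsc hτ hμ x x₀
  rw [h, EReal.top_add_coe, top_le_iff] at hm
  have : f x₀ = ⊤ := by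
    by_contra hz
    rw [← EReal.coe_toReal hz (hf.2 x₀), ← EReal.coe_add] at hm
    exact EReal.coe_ne_top _ hm
  exact hx₀ this

lemma resolvent_subgrad {lam : ℝ} {f : H → EReal}
    (hf : ProperFn f) (hconv : LambdaConvex lam f) (hlsc : LowerSemicontinuous f)
    {τ : ℝ} (hτ : 0 < τ) (hμ : 0 < lam + 1 / τ) (x : H) :
    τ⁻¹ • (x - Jres f τ x) ∈ subdiff lam f (Jres f τ x) := by
  have hbot := hf.2
  have hτ' : τ ≠ 0 := ne_of_gt hτ
  set J := Jres f τ x with hJdef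
  have hJtop : f J ≠ ⊤ := Jres_ne_top hf hconv hlsc hτ hμ x
  have hmin := Jres_min hf hconv hlsc hτ hμ x
  refine ⟨hJtop, fun y => ?_⟩
  by_cases hytop : f y = ⊤
  · rw [hytop]; exact le_top
  set B := (f J).toReal with hBdef
  set G := (f y).toReal with hGdef
  have hfJ : f J = (B : EReal) := (EReal.coe_toReal hJtop (hbot J)).symm
  have hfy : f y = (G : EReal) := (EReal.coe_toReal hytop (hbot y)).symm
  have hip : ⟪τ⁻¹ • (x - J), y - J⟫ = τ⁻¹ * ⟪x - J, y - J⟫ := real_inner_smul_left _ _ _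
  have hinner : 2 * ⟪x - J, y - J⟫ = ‖J - x‖ ^ 2 + ‖y - J‖ ^ 2 - ‖y - x‖ ^ 2 := by
    have h1 := norm_sub_sq_real (x - J) (y - J)
    have h2 : (x - J) - (y - J) = x - y := by abel
    rw [h2] at h1
    have h3 : ‖J - x‖ = ‖x - J‖ := norm_sub_rev _ _
    have h4 : ‖y - x‖ = ‖x - y‖ := norm_sub_rev _ _
    rw [h3, h4]
    linarith
  have hkey : B + (⟪τ⁻¹ • (x - J), y - J⟫ + lam / 2 * ‖y - J‖ ^ 2) ≤ G := by
    apply le_of_forall_pos_le_add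
    intro ε hε
    set K : ℝ := lam / 2 * ‖y - J‖ ^ 2 + ‖y - J‖ ^ 2 / (2 * τ) with hKdef
    have hK0 : 0 ≤ K := by
      rw [hKdef]
      have h2 : lam / 2 * ‖y - J‖ ^ 2 + ‖y - J‖ ^ 2 / (2 * τ)
          = (lam + 1 / τ) / 2 * ‖y - J‖ ^ 2 := by field_simp
      rw [h2]
      exact mul_nonneg (by linarith) (sq_nonneg _)
    set t : ℝ := min (1/2) (ε / (K + 1)) with htdef
    have ht0 : 0 < t := lt_min (by norm_num) (div_pos hε (by linarith))
    have ht1 : t ≤ 1/2 := min_le_left _ _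
    have htK : t * K ≤ ε := by
      have h1 : t ≤ ε / (K + 1) := min_le_right _ _
      have h2 : t * K ≤ (ε / (K + 1)) * K := mul_le_mul_of_nonneg_right h1 hK0
      have h3 : (ε / (K + 1)) * K ≤ ε := by
        rw [div_mul_eq_mul_div, div_le_iff₀ (by linarith : (0:ℝ) < K + 1)]
        nlinarith
      clear_value t K
      linarith
    -- real inequality at parameter t
    have hlc := lamConv_real hconv hbot hJtop hytop ht0.le (by linarith)
    set z := (1 - t) • J + t • y with hzdef
    have hztop : f z ≠ ⊤ := hlc.1
    have hfz : f z = ((f z).toReal : EReal) := (EReal.coe_toReal hztop (hbot z)).symm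
    have hmin' : B + ‖J - x‖ ^ 2 / (2 * τ) ≤ (f z).toReal + ‖z - x‖ ^ 2 / (2 * τ) := by
      have h := hmin z
      rw [hfJ, hfz, ← EReal.coe_add, ← EReal.coe_add, EReal.coe_le_coe_iff] at h
      exact h
    have hq : ‖z - x‖ ^ 2
        = (1 - t) * ‖J - x‖ ^ 2 + t * ‖y - x‖ ^ 2 - t * (1 - t) * ‖J - y‖ ^ 2 := by
      have h1 : z - x = (1 - t) • (J - x) + t • (y - x) := by rw [hzdef]; module
      have h2 : J - y = (J - x) - (y - x) := by abel
      rw [h1, norm_combo_sq, h2]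
    have hfle := hlc.2
    rw [← hBdef, ← hGdef] at hfle
    -- rewrite with an opaque (2*τ)⁻¹ and divide by t
    have hinner3 : τ⁻¹ * ⟪x - J, y - J⟫
        = (‖J - x‖ ^ 2 + ‖y - J‖ ^ 2 - ‖y - x‖ ^ 2) * (2 * τ)⁻¹ := by
      rw [← hinner]; ring
    rw [hip, hinner3]
    rw [hKdef] at htK
    simp only [div_eq_mul_inv] at hmin' htK
    have hι0 : (0:ℝ) < (2 * τ)⁻¹ := by positivity
    set ι := (2 * τ)⁻¹ with hιdef
    have h2 : t * (B + ‖J - x‖ ^ 2 * ι + lam / 2 * (1 - t) * ‖J - y‖ ^ 2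
        + (1 - t) * (‖J - y‖ ^ 2 * ι) - ‖y - x‖ ^ 2 * ι - G) ≤ 0 := by
      have hq2 : ‖z - x‖ ^ 2 * ι
          = ((1 - t) * ‖J - x‖ ^ 2 + t * ‖y - x‖ ^ 2 - t * (1 - t) * ‖J - y‖ ^ 2) * ι := by
        rw [hq]
      clear_value B G t z ι
      nlinarith [hmin', hfle, hq2]
    have hE : B + ‖J - x‖ ^ 2 * ι + lam / 2 * (1 - t) * ‖J - y‖ ^ 2
        + (1 - t) * (‖J - y‖ ^ 2 * ι) - ‖y - x‖ ^ 2 * ι - G ≤ 0 := by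
      by_contra hcon
      push_neg at hcon
      have hpos := mul_pos ht0 hcon
      clear_value B G t z ι
      linarith
    have hJy : ‖J - y‖ = ‖y - J‖ := norm_sub_rev _ _
    rw [hJy] at hE
    clear_value B G t ι
    linarith [hE, htK]
  calc f J + ((⟪τ⁻¹ • (x - J), y - J⟫ + lam / 2 * ‖y - J‖ ^ 2 : ℝ) : EReal)
      = ((B + (⟪τ⁻¹ • (x - J), y - J⟫ + lam / 2 * ‖y - J‖ ^ 2) : ℝ) : EReal) := by
        rw [hfJ, ← EReal.coe_add]
    _ ≤ ((G : ℝ) : EReal) := EReal.coe_le_coe_iff.2 hkey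
    _ = f y := hfy.symm

lemma subdiff_exists_min_norm {lam : ℝ} {f : H → EReal} {x : H}
    (hbot : ∀ z, f z ≠ ⊥) (hne : (subdiff lam f x).Nonempty) :
    ∃ p ∈ subdiff lam f x, ∀ q ∈ subdiff lam f x, ‖p‖ ≤ ‖q‖ := by
  obtain ⟨p₀, hp₀⟩ := hne
  have hne : (subdiff lam f x).Nonempty := ⟨p₀, hp₀⟩
  have hxt : f x ≠ ⊤ := hp₀.1
  set A := (f x).toReal with hAdef
  have hxA : f x = (A : EReal) := (EReal.coe_toReal hxt (hbot x)).symm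
  have hclosed : IsClosed (subdiff lam f x) := by
    have he : subdiff lam f x = ⋂ y : H,
        {p : H | f x + ((⟪p, y - x⟫ + lam / 2 * ‖y - x‖ ^ 2 : ℝ) : EReal) ≤ f y} := by
      ext p
      simp only [subdiff, mem_setOf_eq, mem_iInter, hxt, ne_eq, not_false_eq_true, true_and]
    rw [he]
    refine isClosed_iInter fun y => ?_
    by_cases hyt : f y = ⊤
    · simp only [hyt, le_top, setOf_true]
      exact isClosed_univ
    · obtain ⟨Gy, hGy⟩ : ∃ r : ℝ, f y = (r : EReal) :=
        ⟨_, (EReal.coe_toReal hyt (hbot y)).symm⟩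
      have he2 : {p : H | f x + ((⟪p, y - x⟫ + lam / 2 * ‖y - x‖ ^ 2 : ℝ) : EReal) ≤ f y}
          = {p : H | A + (⟪p, y - x⟫ + lam / 2 * ‖y - x‖ ^ 2) ≤ Gy} := by
        ext p
        rw [mem_setOf_eq, mem_setOf_eq, hxA, hGy, ← EReal.coe_add, EReal.coe_le_coe_iff]
      rw [he2]
      refine isClosed_le ?_ continuous_const
      exact continuous_const.add (((continuous_id.inner continuous_const)).add continuous_const)
  have hconvS : Convex ℝ (subdiff lam f x) := by
    intro p₁ h₁ p₂ h₂ a b ha hb hab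
    refine ⟨hxt, fun y => ?_⟩
    by_cases hyt : f y = ⊤
    · rw [hyt]; exact le_top
    · obtain ⟨Gy, hGy⟩ : ∃ r : ℝ, f y = (r : EReal) :=
        ⟨_, (EReal.coe_toReal hyt (hbot y)).symm⟩
      have hb' : b = 1 - a := by linarith
      subst hb'
      have hr₁ : A + (⟪p₁, y - x⟫ + lam / 2 * ‖y - x‖ ^ 2) ≤ Gy := by
        have h := h₁.2 y
        rw [hxA, hGy, ← EReal.coe_add, EReal.coe_le_coe_iff] at h
        exact h
      have hr₂ : A + (⟪p₂, y - x⟫ + lam / 2 * ‖y - x‖ ^ 2) ≤ Gy := by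
        have h := h₂.2 y
        rw [hxA, hGy, ← EReal.coe_add, EReal.coe_le_coe_iff] at h
        exact h
      rw [hxA, hGy, ← EReal.coe_add, EReal.coe_le_coe_iff]
      have hin : ⟪a • p₁ + (1 - a) • p₂, y - x⟫
          = a * ⟪p₁, y - x⟫ + (1 - a) * ⟪p₂, y - x⟫ := by
        rw [inner_add_left, real_inner_smul_left, real_inner_smul_left]
      rw [hin]
      have s1 := mul_le_mul_of_nonneg_left hr₁ ha
      have s2 := mul_le_mul_of_nonneg_left hr₂ hb
      clear_value A
      nlinarith [s1, s2]
  obtain ⟨v, hv, hvnorm⟩ :=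
    exists_norm_eq_iInf_of_complete_convex hne hclosed.isComplete hconvS 0
  refine ⟨v, hv, fun q hq => ?_⟩
  have h1 : (⨅ w : subdiff lam f x, ‖(0:H) - w‖) ≤ ‖(0:H) - q‖ :=
    ciInf_le ⟨0, forall_mem_range.2 fun _ => norm_nonneg _⟩ (⟨q, hq⟩ : subdiff lam f x)
  rw [← hvnorm] at h1
  simpa using h1

/-- monotonicity properties of the slopes along the resolvent. -/
theorem statement9 (lam : ℝ) (f : H → EReal)
    (hf : ProperFn f) (hconv : LambdaConvex lam f) (hlsc : LowerSemicontinuous f)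
    (τ : ℝ) (hτ : 0 < τ) (hadm : lam < 0 → τ < -1 / lam) (x : H) :
    gradNorm lam f (Jres f τ x) ≤ ENNReal.ofReal (‖x - Jres f τ x‖ / τ) ∧
    ENNReal.ofReal (‖x - Jres f τ x‖ / τ)
      ≤ ENNReal.ofReal ((1 + lam * τ)⁻¹) * gradNorm lam f x := by
  have hbot := hf.2
  have hτ' : τ ≠ 0 := ne_of_gt hτ
  have h1lt : 0 < 1 + lam * τ := by
    rcases lt_or_ge lam 0 with h | h
    · have h2 := hadm h
      have h3 : lam * (-1 / lam) < lam * τ := mul_lt_mul_of_neg_left h2 h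
      have h4 : lam * (-1 / lam) = -1 := by
        field_simp
        rw [div_self h.ne]
      linarith
    · nlinarith [mul_nonneg h hτ.le]
  have hμ : 0 < lam + 1 / τ := by
    have : lam + 1 / τ = (1 + lam * τ) / τ := by field_simp; ring
    rw [this]
    positivity
  set J := Jres f τ x with hJdef
  have hJtop : f J ≠ ⊤ := Jres_ne_top hf hconv hlsc hτ hμ x
  have hp : τ⁻¹ • (x - J) ∈ subdiff lam f J := resolvent_subgrad hf hconv hlsc hτ hμ x
  have hpnorm : ‖τ⁻¹ • (x - J)‖ = ‖x - J‖ / τ := by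
    rw [norm_smul, Real.norm_eq_abs, abs_of_pos (inv_pos.2 hτ)]
    rw [inv_mul_eq_div]
  constructor
  · -- first inequality
    have hne : (subdiff lam f J).Nonempty := ⟨_, hp⟩
    have hex := subdiff_exists_min_norm hbot hne
    rw [gradNorm, if_pos hne, gradMin, dif_pos hex]
    apply ENNReal.ofReal_le_ofReal
    rw [← hpnorm]
    exact hex.choose_spec.2 _ hp
  · -- second inequality
    by_cases hne : (subdiff lam f x).Nonempty
    · have hex := subdiff_exists_min_norm hbot hne
      rw [gradNorm, if_pos hne, gradMin, dif_pos hex]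
      set q := hex.choose with hqdef
      have hq : q ∈ subdiff lam f x := hex.choose_spec.1
      have hxt : f x ≠ ⊤ := hq.1
      set A := (f x).toReal with hAdef
      set B := (f J).toReal with hBdef
      have hxA : f x = (A : EReal) := (EReal.coe_toReal hxt (hbot x)).symm
      have hJB : f J = (B : EReal) := (EReal.coe_toReal hJtop (hbot J)).symm
      set d := ‖x - J‖ with hddef
      have hd0 : 0 ≤ d := norm_nonneg _
      -- subgradient inequality for q at J
      have hq1 : A + (⟪q, J - x⟫ + lam / 2 * ‖J - x‖ ^ 2) ≤ B := by
        have h := hq.2 J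
        rw [hxA, hJB, ← EReal.coe_add, EReal.coe_le_coe_iff] at h
        exact h
      -- subgradient inequality for p at x
      have hp1 : B + (τ⁻¹ * d ^ 2 + lam / 2 * d ^ 2) ≤ A := by
        have h := hp.2 x
        rw [hxA, hJB, ← EReal.coe_add, EReal.coe_le_coe_iff] at h
        have hip : ⟪τ⁻¹ • (x - J), x - J⟫ = τ⁻¹ * d ^ 2 := by
          rw [real_inner_smul_left, real_inner_self_eq_norm_sq]
        rw [hip] at h
        exact h
      have hJx : ‖J - x‖ = d := by rw [hddef, norm_sub_rev]
      rw [hJx] at hq1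
      have hqin : ⟪q, J - x⟫ = -⟪q, x - J⟫ := by
        rw [← inner_neg_right]
        congr 1
        abel
      rw [hqin] at hq1
      have hqn : ⟪q, x - J⟫ ≤ ‖q‖ * d := by
        rw [hddef]
        exact real_inner_le_norm q (x - J)
      -- combine
      have hmain : d / τ ≤ (1 + lam * τ)⁻¹ * ‖q‖ := by
        rcases eq_or_lt_of_le hd0 with h0 | h0
        · rw [← h0]
          simp
          positivity
        · have hkey : (τ⁻¹ + lam) * d ^ 2 ≤ ‖q‖ * d := by nlinarith [hq1, hp1, hqn]
          have hkey2 : (1 + lam * τ) * d ^ 2 ≤ ‖q‖ * d * τ := by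
            have h5 := mul_le_mul_of_nonneg_left hkey hτ.le
            have h6 : τ * ((τ⁻¹ + lam) * d ^ 2) = (1 + lam * τ) * d ^ 2 := by
              field_simp
            rw [h6] at h5
            linarith
          rw [inv_mul_eq_div, le_div_iff₀ h1lt, div_mul_eq_mul_div, div_le_iff₀ hτ]
          nlinarith [hkey2, h0]
      calc ENNReal.ofReal (d / τ) ≤ ENNReal.ofReal ((1 + lam * τ)⁻¹ * ‖q‖) :=
            ENNReal.ofReal_le_ofReal hmain
        _ = ENNReal.ofReal ((1 + lam * τ)⁻¹) * ENNReal.ofReal ‖q‖ :=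
            ENNReal.ofReal_mul (by positivity)
    · rw [gradNorm, if_neg hne]
      rw [ENNReal.mul_top]
      · exact le_top
      · simp only [ne_eq, ENNReal.ofReal_eq_zero, not_le]
        positivity

end
end

section
/- Let H be a real Hilbert space, λ ∈ ℝ, and let f : H → (-∞,∞] be proper, λ-convex and lower semicontinuous. For x ∈ H with f(x) < ∞, define S(x) := sup_{y ≠ x} [f(x) − f(y) + (λ/2)‖x−y‖²]⁺ / ‖x−y‖. Then ∂f(x) is nonempty if and only if S(x) < ∞, and in that case |∇f|(x) = S(x). -/
open Filter Topology MeasureTheory Set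
open scoped ENNReal RealInnerProductSpace

noncomputable section

attribute [local instance] Classical.propDecidable

variable {H : Type*} [NormedAddCommGroup H] [InnerProductSpace ℝ H] [CompleteSpace H]

section Aux
variable {H : Type*} [NormedAddCommGroup H] [InnerProductSpace ℝ H] [CompleteSpace H]

set_option linter.unusedSectionVars false

lemma norm_combo (a b x : H) (t : ℝ) :
    ‖((1-t)•a + t•b) - x‖^2 = (1-t)*‖a-x‖^2 + t*‖b-x‖^2 - t*(1-t)*‖a-b‖^2 := by
  have h1 : ((1-t)•a + t•b) - x = (1-t)•(a-x) + t•(b-x) := by module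
  have h2 : a - b = (a-x) - (b-x) := by abel
  rw [h1, h2]
  simp only [← real_inner_self_eq_norm_sq, inner_add_add_self, inner_sub_sub_self,
    real_inner_smul_left, real_inner_smul_right]
  rw [real_inner_comm (b-x) (a-x)]
  ring

lemma key_convex {lam : ℝ} {f : H → EReal} (hconv : LambdaConvex lam f)
    {a b : H} {ra rb : ℝ} (ha : f a = (ra : EReal)) (hb : f b = (rb : EReal))
    {t : ℝ} (ht0 : 0 ≤ t) (ht1 : t ≤ 1) :
    f ((1-t)•a + t•b) ≤ (((1-t)*ra + t*rb - lam/2*(t*(1-t))*‖a-b‖^2 : ℝ) : EReal) := by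
  have := hconv a b t ht0 ht1
  rw [ha, hb] at this
  rw [← EReal.coe_mul, ← EReal.coe_mul, ← EReal.coe_add, ← EReal.coe_sub] at this
  exact this

lemma ereal_fin {f : H → EReal} (hf : ProperFn f) {y : H} (hy : f y ≠ ⊤) :
    f y = ((f y).toReal : EReal) := (EReal.coe_toReal hy (hf.2 y)).symm


lemma exists_subgrad {lam : ℝ} {f : H → EReal} (hf : ProperFn f) (hconv : LambdaConvex lam f)
    {x : H} (hx : f x ≠ ⊤) {s : ℝ} (hs : 0 ≤ s)
    (hb : ∀ y : H, (((f x).toReal + lam/2*‖y-x‖^2 - s*‖y-x‖ : ℝ) : EReal) ≤ f y) :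
    ∃ p ∈ subdiff lam f x, ‖p‖ ≤ s := by
  set fx := (f x).toReal with hfxdef
  have hfx : f x = (fx : EReal) := ereal_fin hf hx
  set E : Set (H × ℝ) := {z | f z.1 ≤ ((fx + lam/2*‖z.1-x‖^2 + z.2 : ℝ) : EReal)} with hEdef
  set O : Set (H × ℝ) := {z | z.2 + s * ‖z.1 - x‖ < 0} with hOdef
  have hOopen : IsOpen O := by
    have : Continuous fun z : H × ℝ => z.2 + s * ‖z.1 - x‖ :=
      continuous_snd.add (continuous_const.mul ((continuous_fst.sub continuous_const).norm))
    exact isOpen_lt this continuous_const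
  have hOconv : Convex ℝ O := by
    rintro za hza zb hzb u v hu hv huv
    simp only [hOdef, mem_setOf_eq] at hza hzb ⊢
    have hnorm : ‖(u • za + v • zb).1 - x‖ ≤ u * ‖za.1 - x‖ + v * ‖zb.1 - x‖ := by
      have h1 : (u • za + v • zb).1 - x = u • (za.1 - x) + v • (zb.1 - x) := by
        have h2 : u • za.1 + v • zb.1 - x
            = u • (za.1 - x) + v • (zb.1 - x) + (u + v - 1) • x := by module
        simp only [Prod.fst_add, Prod.smul_fst]
        rw [h2, huv]; simp
      rw [h1]
      calc ‖u • (za.1 - x) + v • (zb.1 - x)‖ ≤ ‖u • (za.1 - x)‖ + ‖v • (zb.1 - x)‖ :=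
            norm_add_le _ _
        _ = u * ‖za.1 - x‖ + v * ‖zb.1 - x‖ := by
            rw [norm_smul, norm_smul, Real.norm_eq_abs, Real.norm_eq_abs,
              abs_of_nonneg hu, abs_of_nonneg hv]
    have hsnd : (u • za + v • zb).2 = u * za.2 + v * zb.2 := rfl
    rw [hsnd]
    rcases eq_or_lt_of_le hu with hu0 | hu0
    · have hv1 : v = 1 := by linarith
      have hu1 : u = 0 := hu0.symm
      subst hu1; subst hv1
      simp only [zero_mul, zero_add, one_mul] at hnorm ⊢
      nlinarith [mul_le_mul_of_nonneg_left hnorm hs]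
    · have h1 : u * za.2 < u * (-(s * ‖za.1 - x‖)) := by
        apply mul_lt_mul_of_pos_left _ hu0
        linarith
      have h2 : v * zb.2 ≤ v * (-(s * ‖zb.1 - x‖)) := by
        apply mul_le_mul_of_nonneg_left _ hv
        linarith
      nlinarith [mul_le_mul_of_nonneg_left hnorm hs]
  have hEconv : Convex ℝ E := by
    rintro za hza zb hzb u v hu hv huv
    simp only [hEdef, mem_setOf_eq] at hza hzb ⊢
    have hfa : f za.1 ≠ ⊤ := by
      intro h; rw [h, top_le_iff] at hza; exact EReal.coe_ne_top _ hza
    have hfb : f zb.1 ≠ ⊤ := by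
      intro h; rw [h, top_le_iff] at hzb; exact EReal.coe_ne_top _ hzb
    have hfa' : f za.1 = ((f za.1).toReal : EReal) := ereal_fin hf hfa
    have hfb' : f zb.1 = ((f zb.1).toReal : EReal) := ereal_fin hf hfb
    set ra := (f za.1).toReal
    set rb := (f zb.1).toReal
    rw [hfa'] at hza; rw [hfb'] at hzb
    rw [EReal.coe_le_coe_iff] at hza hzb
    have hu1 : u = 1 - v := by linarith
    have hcomb : (u • za + v • zb).1 = (1-v) • za.1 + v • zb.1 := by
      simp only [Prod.smul_fst, Prod.fst_add, hu1]
    have hkey := key_convex hconv hfa' hfb' hv (by linarith : v ≤ 1)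
    rw [hcomb]
    refine le_trans hkey ?_
    rw [EReal.coe_le_coe_iff]
    have hnc := norm_combo za.1 zb.1 x v
    have hsnd : (u • za + v • zb).2 = (1-v) * za.2 + v * zb.2 := by
      simp only [Prod.smul_snd, Prod.snd_add, hu1, smul_eq_mul]
    rw [hsnd, hnc]
    nlinarith [mul_le_mul_of_nonneg_left hza (by linarith : (0:ℝ) ≤ 1 - v),
      mul_le_mul_of_nonneg_left hzb hv]
  have hdisj : Disjoint O E := by
    rw [Set.disjoint_left]
    rintro z hzO hzE
    simp only [hOdef, hEdef, mem_setOf_eq] at hzO hzE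
    have := le_trans (hb z.1) hzE
    rw [EReal.coe_le_coe_iff] at this
    linarith
  obtain ⟨ℓ, c, hO, hE⟩ := geometric_hahn_banach_open hOconv hOopen hEconv hdisj
  set β := ℓ ((0 : H), (1 : ℝ)) with hβdef
  set L : H → ℝ := fun y => ℓ (y, 0) with hLdef
  have hlin : ∀ (y : H) (t : ℝ), ℓ (y, t) = L y + t * β := by
    intro y t
    have : (y, t) = (y, (0:ℝ)) + t • ((0:H), (1:ℝ)) := by
      simp [Prod.ext_iff]
    rw [this, map_add, _root_.map_smul, smul_eq_mul]
  have hLsub : ∀ y z : H, L (y - z) = L y - L z := by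
    intro y z
    simp only [hLdef]
    rw [show ((y - z, (0:ℝ)) : H × ℝ) = (y, (0:ℝ)) - (z, (0:ℝ)) by simp [Prod.ext_iff],
      map_sub]
  have hxx : ‖x - x‖ = 0 := by simp
  have hxE : ((x, (0:ℝ)) : H × ℝ) ∈ E := by
    simp only [hEdef, mem_setOf_eq, hxx]
    rw [hfx]; norm_num
  have hcLx : c ≤ L x := by
    have := hE _ hxE
    rw [hlin] at this; simpa using this
  have hβpos : 0 < β := by
    have hmem : ((x, (-1:ℝ)) : H × ℝ) ∈ O := by
      simp only [hOdef, mem_setOf_eq, hxx]; norm_num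
    have := hO _ hmem
    rw [hlin] at this
    by_contra hβ
    push_neg at hβ
    nlinarith
  have hβne : β ≠ 0 := ne_of_gt hβpos
  have hLxc : L x ≤ c := by
    by_contra hcon
    push_neg at hcon
    set ε := (L x - c) / (2 * β) with hεdef
    have hε : 0 < ε := div_pos (by linarith) (by linarith)
    have hmem : ((x, -ε) : H × ℝ) ∈ O := by
      simp only [hOdef, mem_setOf_eq, hxx]; nlinarith
    have h3 := hO _ hmem
    rw [hlin] at h3
    have hεβ : ε * β = (L x - c) / 2 := by
      rw [hεdef]; field_simp
    nlinarith
  have hceq : c = L x := le_antisymm hcLx hLxc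
  set Lcl : H →L[ℝ] ℝ := ℓ.comp (ContinuousLinearMap.inl ℝ H ℝ) with hLcl
  set p : H := -(β⁻¹) • ((InnerProductSpace.toDual ℝ H).symm Lcl) with hpdef
  have hip : ∀ y : H, ⟪p, y⟫ = -(L y) / β := by
    intro y
    rw [hpdef, real_inner_smul_left, InnerProductSpace.toDual_symm_apply]
    have : Lcl y = L y := rfl
    rw [this]; field_simp
  -- bound from O-side
  have hOkey : ∀ y : H, ⟪p, x - y⟫ ≤ s * ‖y - x‖ := by
    intro y
    have hge : -(s * ‖y-x‖) ≤ (L x - L y) / β := by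
      by_contra hcon
      push_neg at hcon
      set ε := (-(s * ‖y-x‖) - (L x - L y)/β) / 2 with hεdef
      have hε : 0 < ε := by
        rw [hεdef]; linarith
      have hmem : ((y, -(s*‖y-x‖) - ε) : H × ℝ) ∈ O := by
        simp only [hOdef, mem_setOf_eq]; linarith
      have h3 := hO _ hmem
      rw [hlin, hceq] at h3
      have h4 : (-(s * ‖y-x‖) - ε) * β < L x - L y := by linarith
      rw [← lt_div_iff₀ hβpos] at h4
      linarith
    have h5 : ⟪p, x - y⟫ = -((L x - L y) / β) := by
      rw [hip, hLsub]; ring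
    linarith
  -- p is a subgradient
  refine ⟨p, ⟨hx, ?_⟩, ?_⟩
  · intro y
    by_cases hy : f y = ⊤
    · rw [hy]; exact le_top
    have hy' : f y = ((f y).toReal : EReal) := ereal_fin hf hy
    set ry := (f y).toReal
    have hmemE : ((y, ry - fx - lam/2*‖y-x‖^2) : H × ℝ) ∈ E := by
      simp only [hEdef, mem_setOf_eq]
      rw [hy', EReal.coe_le_coe_iff]
      ring_nf
      exact le_refl _
    have h6 := hE _ hmemE
    rw [hlin] at h6
    have h7 : (ry - fx - lam/2*‖y-x‖^2) * β ≥ c - L y := by linarith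
    have h8 : ry - fx - lam/2*‖y-x‖^2 ≥ (c - L y) / β := by
      rw [ge_iff_le, div_le_iff₀ hβpos]; linarith
    have h9 : ⟪p, y - x⟫ = -((L y - L x) / β) := by
      rw [hip, hLsub]; ring
    rw [hfx, hy', ← EReal.coe_add, EReal.coe_le_coe_iff]
    have h10 : -((L y - L x) / β) = (L x - L y)/β := by ring
    have h11 : (c - L y)/β = (L x - L y)/β := by rw [hceq]
    rw [h9, h10]
    linarith [h8, h11.symm.le, h11.le]
  · -- norm bound
    have hw : ∀ w : H, ⟪p, w⟫ ≤ s * ‖w‖ := by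
      intro w
      have := hOkey (x - w)
      simpa using this
    by_cases hp0 : ‖p‖ = 0
    · linarith
    · have hppos : 0 < ‖p‖ := lt_of_le_of_ne (norm_nonneg _) (Ne.symm hp0)
      have := hw p
      rw [real_inner_self_eq_norm_sq] at this
      nlinarith


/-- The easy direction: each difference quotient is bounded by `‖p‖` for any subgradient. -/
lemma quot_le_of_subgrad {lam : ℝ} {f : H → EReal} (hf : ProperFn f)
    {x : H} {p : H} (hp : p ∈ subdiff lam f x) {y : H} (hy : y ≠ x) :
    (max (f x - f y + ((lam / 2 * ‖x - y‖ ^ 2 : ℝ) : EReal)) 0).toReal / ‖x - y‖ ≤ ‖p‖ := by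
  obtain ⟨hx, hsub⟩ := hp
  have hfx : f x = ((f x).toReal : EReal) := ereal_fin hf hx
  set fx := (f x).toReal
  have hd : (0:ℝ) < ‖x - y‖ := by
    rw [norm_pos_iff]; exact sub_ne_zero_of_ne hy.symm
  rw [div_le_iff₀ hd]
  by_cases hfy : f y = ⊤
  · rw [hfx, hfy]
    have hb : (fx : EReal) - ⊤ = ⊥ := rfl
    rw [hb]
    have hb2 : (⊥ : EReal) + ((lam / 2 * ‖x - y‖ ^ 2 : ℝ) : EReal) = ⊥ := rfl
    rw [hb2, max_eq_right bot_le]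
    simpa using mul_nonneg (norm_nonneg p) hd.le
  · have hfy' : f y = ((f y).toReal : EReal) := ereal_fin hf hfy
    set ry := (f y).toReal
    have hco : f x - f y + ((lam / 2 * ‖x - y‖ ^ 2 : ℝ) : EReal)
        = ((fx - ry + lam / 2 * ‖x - y‖ ^ 2 : ℝ) : EReal) := by
      rw [hfx, hfy', ← EReal.coe_sub, ← EReal.coe_add]
    have hmax : max (((fx - ry + lam / 2 * ‖x - y‖ ^ 2 : ℝ) : EReal)) 0
        = ((max (fx - ry + lam / 2 * ‖x - y‖ ^ 2) 0 : ℝ) : EReal) := rfl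
    rw [hco, hmax, EReal.toReal_coe]
    have hsy := hsub y
    rw [hfx, hfy', ← EReal.coe_add, EReal.coe_le_coe_iff] at hsy
    have hnr : ‖y - x‖ = ‖x - y‖ := norm_sub_rev _ _
    rw [hnr] at hsy
    have hin : -⟪p, y - x⟫ ≤ ‖p‖ * ‖x - y‖ := by
      have h1 : |⟪p, y - x⟫| ≤ ‖p‖ * ‖y - x‖ := abs_real_inner_le_norm _ _
      rw [hnr] at h1
      have := neg_abs_le (⟪p, y - x⟫)
      linarith [abs_nonneg (⟪p, y - x⟫)]
    apply max_le
    · linarith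
    · exact mul_nonneg (norm_nonneg p) hd.le

/-- Existence of the minimal norm element of a nonempty subdifferential. -/
lemma exists_min_norm {lam : ℝ} {f : H → EReal} (hf : ProperFn f)
    {x : H} (hne : (subdiff lam f x).Nonempty) :
    ∃ p ∈ subdiff lam f x, ∀ q ∈ subdiff lam f x, ‖p‖ ≤ ‖q‖ := by
  have hx : f x ≠ ⊤ := hne.choose_spec.1
  have hfx : f x = ((f x).toReal : EReal) := ereal_fin hf hx
  set fx := (f x).toReal
  -- subdiff is closed
  have hrepr : subdiff lam f x
      = ⋂ y : H, {p : H | (((fx + (⟪p, y - x⟫ + lam / 2 * ‖y - x‖ ^ 2)) : ℝ) : EReal) ≤ f y} := by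
    ext p
    simp only [subdiff, mem_setOf_eq, mem_iInter, hx, ne_eq, not_false_iff, true_and]
    constructor
    · intro h y; have := h y; rw [hfx, ← EReal.coe_add] at this; exact this
    · intro h y; have := h y; rw [hfx, ← EReal.coe_add]; exact this
  have hclosed : IsClosed (subdiff lam f x) := by
    rw [hrepr]
    apply isClosed_iInter
    intro y
    by_cases hfy : f y = ⊤
    · have : {p : H | (((fx + (⟪p, y - x⟫ + lam / 2 * ‖y - x‖ ^ 2)) : ℝ) : EReal) ≤ f y}
          = univ := by
        ext p; simp [hfy]
      rw [this]; exact isClosed_univ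
    · have hfy' : f y = ((f y).toReal : EReal) := ereal_fin hf hfy
      set ry := (f y).toReal
      have : {p : H | (((fx + (⟪p, y - x⟫ + lam / 2 * ‖y - x‖ ^ 2)) : ℝ) : EReal) ≤ f y}
          = {p : H | fx + (⟪p, y - x⟫ + lam / 2 * ‖y - x‖ ^ 2) ≤ ry} := by
        ext p; rw [mem_setOf_eq, mem_setOf_eq, hfy', EReal.coe_le_coe_iff]
      rw [this]
      apply isClosed_le _ continuous_const
      exact continuous_const.add ((Continuous.inner continuous_id continuous_const).add
        continuous_const)
  have hconvex : Convex ℝ (subdiff lam f x) := by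
    rintro p hp q hq u v hu hv huv
    refine ⟨hx, fun y => ?_⟩
    by_cases hfy : f y = ⊤
    · rw [hfy]; exact le_top
    have hfy' : f y = ((f y).toReal : EReal) := ereal_fin hf hfy
    set ry := (f y).toReal
    have hp2 := hp.2 y
    have hq2 := hq.2 y
    rw [hfx, hfy', ← EReal.coe_add, EReal.coe_le_coe_iff] at hp2 hq2 ⊢
    have hi : ⟪u • p + v • q, y - x⟫ = u * ⟪p, y - x⟫ + v * ⟪q, y - x⟫ := by
      rw [inner_add_left, real_inner_smul_left, real_inner_smul_left]
    rw [hi]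
    have hv1 : v = 1 - u := by linarith
    subst hv1
    linarith [mul_le_mul_of_nonneg_left hp2 hu,
      mul_le_mul_of_nonneg_left hq2 (by linarith : (0:ℝ) ≤ 1 - u)]
  obtain ⟨v, hv, hveq⟩ :=
    exists_norm_eq_iInf_of_complete_convex hne hclosed.isComplete hconvex 0
  refine ⟨v, hv, fun q hq => ?_⟩
  have hbdd : BddBelow (Set.range fun w : subdiff lam f x => ‖(0:H) - w‖) := by
    refine ⟨0, ?_⟩
    rintro r ⟨w, rfl⟩
    positivity
  have hle : (⨅ w : subdiff lam f x, ‖(0:H) - w‖) ≤ ‖(0:H) - q‖ := ciInf_le hbdd ⟨q, hq⟩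
  rw [← hveq] at hle
  simpa using hle

end Aux

/-- variational characterization of `|∇f|`. -/
theorem statement11 (lam : ℝ) (f : H → EReal)
    (hf : ProperFn f) (hconv : LambdaConvex lam f) (hlsc : LowerSemicontinuous f)
    (x : H) (hx : f x ≠ ⊤) :
    ((subdiff lam f x).Nonempty ↔
      (⨆ (y : H) (_ : y ≠ x), ENNReal.ofReal
        ((max (f x - f y + ((lam / 2 * ‖x - y‖ ^ 2 : ℝ) : EReal)) 0).toReal / ‖x - y‖)) ≠ ⊤) ∧
    ((subdiff lam f x).Nonempty →
      ENNReal.ofReal ‖gradMin lam f x‖ =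
        ⨆ (y : H) (_ : y ≠ x), ENNReal.ofReal
          ((max (f x - f y + ((lam / 2 * ‖x - y‖ ^ 2 : ℝ) : EReal)) 0).toReal / ‖x - y‖)) := by
  set S := (⨆ (y : H) (_ : y ≠ x), ENNReal.ofReal
      ((max (f x - f y + ((lam / 2 * ‖x - y‖ ^ 2 : ℝ) : EReal)) 0).toReal / ‖x - y‖)) with hS
  have hfx : f x = ((f x).toReal : EReal) := ereal_fin hf hx
  set fx := (f x).toReal with hfxd
  have hup : ∀ p ∈ subdiff lam f x, S ≤ ENNReal.ofReal ‖p‖ := by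
    intro p hp
    rw [hS]
    refine iSup₂_le fun y hy => ?_
    exact ENNReal.ofReal_le_ofReal (quot_le_of_subgrad hf hp hy)
  have hdown : S ≠ ⊤ → ∃ p ∈ subdiff lam f x, ‖p‖ ≤ S.toReal := by
    intro hSne
    set s := S.toReal with hsd
    have hs0 : 0 ≤ s := ENNReal.toReal_nonneg
    apply exists_subgrad hf hconv hx hs0
    intro y
    by_cases hyx : y = x
    · subst hyx
      simp only [sub_self, norm_zero]
      rw [← hfxd, hfx]
      norm_num
    · have hterm : ENNReal.ofReal
          ((max (f x - f y + ((lam / 2 * ‖x - y‖ ^ 2 : ℝ) : EReal)) 0).toReal / ‖x - y‖) ≤ S := by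
        rw [hS]
        exact le_iSup₂ (f := fun (y : H) (_ : y ≠ x) => ENNReal.ofReal
          ((max (f x - f y + ((lam / 2 * ‖x - y‖ ^ 2 : ℝ) : EReal)) 0).toReal / ‖x - y‖)) y hyx
      rw [← ENNReal.ofReal_toReal hSne, ← hsd] at hterm
      rw [ENNReal.ofReal_le_ofReal_iff hs0] at hterm
      have hd : (0:ℝ) < ‖x - y‖ := by
        rw [norm_pos_iff]; exact sub_ne_zero_of_ne (Ne.symm hyx)
      rw [div_le_iff₀ hd] at hterm
      by_cases hfy : f y = ⊤
      · rw [hfy]; exact le_top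
      · have hfy' : f y = ((f y).toReal : EReal) := ereal_fin hf hfy
        set ry := (f y).toReal
        have hco : f x - f y + ((lam / 2 * ‖x - y‖ ^ 2 : ℝ) : EReal)
            = ((fx - ry + lam / 2 * ‖x - y‖ ^ 2 : ℝ) : EReal) := by
          rw [hfx, hfy', ← EReal.coe_sub, ← EReal.coe_add]
        have hmax : max (((fx - ry + lam / 2 * ‖x - y‖ ^ 2 : ℝ) : EReal)) 0
            = ((max (fx - ry + lam / 2 * ‖x - y‖ ^ 2) 0 : ℝ) : EReal) := rfl
        rw [hco, hmax, EReal.toReal_coe] at hterm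
        have h1 : fx - ry + lam / 2 * ‖x - y‖ ^ 2 ≤ s * ‖x - y‖ :=
          le_trans (le_max_left _ _) hterm
        rw [hfy', EReal.coe_le_coe_iff]
        have hnr : ‖y - x‖ = ‖x - y‖ := norm_sub_rev _ _
        rw [hnr]
        linarith
  constructor
  · constructor
    · rintro ⟨p, hp⟩
      exact ne_top_of_le_ne_top ENNReal.ofReal_ne_top (hup p hp)
    · intro hSne
      obtain ⟨p, hp, -⟩ := hdown hSne
      exact ⟨p, hp⟩
  · intro hne
    have hex : ∃ p ∈ subdiff lam f x, ∀ q ∈ subdiff lam f x, ‖p‖ ≤ ‖q‖ :=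
      exists_min_norm hf hne
    have hgmem : gradMin lam f x ∈ subdiff lam f x ∧
        ∀ q ∈ subdiff lam f x, ‖gradMin lam f x‖ ≤ ‖q‖ := by
      unfold gradMin
      rw [dif_pos hex]
      exact hex.choose_spec
    have h1 : S ≤ ENNReal.ofReal ‖gradMin lam f x‖ := hup _ hgmem.1
    have hSne : S ≠ ⊤ := ne_top_of_le_ne_top ENNReal.ofReal_ne_top h1
    obtain ⟨q, hq, hqs⟩ := hdown hSne
    have h2 : ‖gradMin lam f x‖ ≤ S.toReal := le_trans (hgmem.2 q hq) hqs
    have h3 : ENNReal.ofReal ‖gradMin lam f x‖ ≤ S := by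
      rw [← ENNReal.ofReal_toReal hSne]
      exact ENNReal.ofReal_le_ofReal h2
    exact le_antisymm h3 h1


end
end
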